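/- arXiv:2009.03570 — 4 statements merged into one kernel-verified Lean document; each statement's English description precedes it below -/
import Mathlib

section
/- Fix an integer d ≥ 1, a complex Hilbert space H, a Clifford system (c_1, …, c_d, γ) on H, and unitaries U_1, …, U_d on H, each commuting with every c_j and with γ. Let δ ≥ 0 satisfy ‖U_j U_l − U_l U_j‖ ≤ δ for all j, l. Then for all real numbers κ, m with 0 < m ≤ κ, the operator inequality D(κ, m)² ≥ (m² − 4 d² κ² δ)·1 holds. -/
noncomputable section

/-- A Clifford system `(c_1, …, c_d, γ)` on a complex Hilbert space `H`:
`c_j* = -c_j`, `c_j c_l + c_l c_j = -2 δ_{jl} 1`, `γ* = γ`, `γ² = 1`, `γ c_j = -c_j γ`. -/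
structure CliffordSystem (H : Type*) [NormedAddCommGroup H] [InnerProductSpace ℂ H]
    [CompleteSpace H] (d : ℕ) where
  c : Fin d → H →L[ℂ] H
  γ : H →L[ℂ] H
  c_skew : ∀ j, star (c j) = -c j
  c_rel : ∀ j l, c j * c l + c l * c j =
    if j = l then (-2 : ℂ) • (1 : H →L[ℂ] H) else 0
  γ_sa : star γ = γ
  γ_sq : γ * γ = 1
  γ_anticomm : ∀ j, γ * c j = -(c j * γ)

variable {H : Type*} [NormedAddCommGroup H] [InnerProductSpace ℂ H] [CompleteSpace H]

/-- `x = (U - U*)/(2i)`, the "imaginary part" of a unitary `U`. -/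
def xPart (U : H →L[ℂ] H) : H →L[ℂ] H := ((2 * Complex.I)⁻¹ : ℂ) • (U - star U)

/-- `y = (U + U*)/2`, the "real part" of a unitary `U`. -/
def yPart (U : H →L[ℂ] H) : H →L[ℂ] H := ((2 : ℂ)⁻¹ : ℂ) • (U + star U)

/-- The massive hermitian Wilson--Dirac operator
`D(κ, m) = κ·Σ_j i x_j c_j + γ·(κ·Σ_j (y_j − 1) + m)`. -/
def wilsonDirac {d : ℕ} (cs : CliffordSystem H d) (U : Fin d → H →L[ℂ] H)
    (κ m : ℝ) : H →L[ℂ] H :=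
  (κ : ℂ) • (∑ j, Complex.I • (xPart (U j) * cs.c j)) +
    cs.γ * ((κ : ℂ) • (∑ j, (yPart (U j) - 1)) + (m : ℂ) • (1 : H →L[ℂ] H))

/-- `f_m(k)² = Σ_j sin²(2π k_j) + (Σ_j (cos(2π k_j) − 1) + m)²`. -/
def fmSq (d : ℕ) (m : ℝ) (k : Fin d → ℝ) : ℝ :=
  ∑ j, Real.sin (2 * Real.pi * k j) ^ 2 +
    (∑ j, (Real.cos (2 * Real.pi * k j) - 1) + m) ^ 2

/-- `E_{>0}(A)`: the sum of the eigenspaces of `A` with positive (real) eigenvalue. -/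
def posSpace (A : H →L[ℂ] H) : Submodule ℂ H :=
  ⨆ (μ : ℝ) (_ : 0 < μ), Module.End.eigenspace (A.toLinearMap) (μ : ℂ)

/-- `E_{<0}(A)`: the sum of the eigenspaces of `A` with negative (real) eigenvalue. -/
def negSpace (A : H →L[ℂ] H) : Submodule ℂ H :=
  ⨆ (μ : ℝ) (_ : μ < 0), Module.End.eigenspace (A.toLinearMap) (μ : ℂ)

/-- `𝐈(A) = (dim E_{>0}(A) − dim E_{<0}(A))/2`, a priori a half-integer. -/
def Ind (A : H →L[ℂ] H) : ℚ :=
  ((Module.finrank ℂ (posSpace A) : ℚ) - (Module.finrank ℂ (negSpace A) : ℚ)) / 2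

end

noncomputable section Stmt1Aux

set_option linter.unusedSectionVars false
set_option maxHeartbeats 1000000

open ContinuousLinearMap in
private lemma st1_re_star_mul {H : Type*} [NormedAddCommGroup H] [InnerProductSpace ℂ H]
    [CompleteSpace H] (X : H →L[ℂ] H) (v : H) :
    RCLike.re (@inner ℂ H _ ((star X * X) v) v) = ‖X v‖ ^ 2 := by
  rw [ContinuousLinearMap.star_eq_adjoint, ContinuousLinearMap.mul_apply,
    ContinuousLinearMap.adjoint_inner_left, inner_self_eq_norm_sq]

private lemma st1_re_ge {H : Type*} [NormedAddCommGroup H] [InnerProductSpace ℂ H]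
    [CompleteSpace H] (X : H →L[ℂ] H) (v : H) :
    -(‖X‖ * ‖v‖ ^ 2) ≤ RCLike.re (@inner ℂ H _ (X v) v) := by
  have h0 : |RCLike.re (@inner ℂ H _ (X v) v)| ≤ ‖X‖ * ‖v‖ ^ 2 := by
    calc |RCLike.re (@inner ℂ H _ (X v) v)| ≤ ‖@inner ℂ H _ (X v) v‖ := RCLike.abs_re_le_norm _
      _ ≤ ‖X v‖ * ‖v‖ := norm_inner_le_norm _ _
      _ ≤ ‖X‖ * ‖v‖ * ‖v‖ := mul_le_mul_of_nonneg_right (X.le_opNorm v) (norm_nonneg v)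
      _ = ‖X‖ * ‖v‖ ^ 2 := by ring
  linarith [(abs_le.mp h0).1]

private lemma st1_re_smul {H : Type*} [NormedAddCommGroup H] [InnerProductSpace ℂ H]
    [CompleteSpace H] (X : H →L[ℂ] H) (r : ℝ) (v : H) :
    RCLike.re (@inner ℂ H _ ((((r : ℂ)) • X) v) v) = r * RCLike.re (@inner ℂ H _ (X v) v) := by
  rw [ContinuousLinearMap.smul_apply, inner_smul_left]
  simp [Complex.mul_re]

private lemma st1_re_sum {H : Type*} [NormedAddCommGroup H] [InnerProductSpace ℂ H]
    [CompleteSpace H] {n : ℕ} (f : Fin n → (H →L[ℂ] H)) (v : H) :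
    RCLike.re (@inner ℂ H _ ((∑ j, f j) v) v) = ∑ j, RCLike.re (@inner ℂ H _ (f j v) v) := by
  rw [ContinuousLinearMap.sum_apply, sum_inner, map_sum]

private lemma st1_re_add {H : Type*} [NormedAddCommGroup H] [InnerProductSpace ℂ H]
    [CompleteSpace H] (X Y : H →L[ℂ] H) (v : H) :
    RCLike.re (@inner ℂ H _ ((X + Y) v) v)
      = RCLike.re (@inner ℂ H _ (X v) v) + RCLike.re (@inner ℂ H _ (Y v) v) := by
  rw [ContinuousLinearMap.add_apply, inner_add_left, map_add]

private lemma st1_norm_le_one_of_unitary {H : Type*} [NormedAddCommGroup H]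
    [InnerProductSpace ℂ H] [CompleteSpace H] (u : H →L[ℂ] H)
    (hu : u ∈ unitary (H →L[ℂ] H)) : ‖u‖ ≤ 1 := by
  have h : ‖u‖ * ‖u‖ = ‖(1 : H →L[ℂ] H)‖ := by
    rw [← Unitary.star_mul_self_of_mem hu]; exact (CStarRing.norm_star_mul_self).symm
  have h2 : ‖(1 : H →L[ℂ] H)‖ ≤ 1 := ContinuousLinearMap.norm_id_le
  nlinarith [norm_nonneg u]

private lemma st1_ztrick {R : Type*} [Ring R] (a sa b sb : R) :
    sa * a * (sb * b)
      = (sb * sa) * (a * b) + ((sa * sb - sb * sa) * (a * b) + sa * ((a * sb - sb * a) * b)) := by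
  noncomm_ring

private lemma st1_cross_pair {R : Type*} [Ring R] (xj cj g s : R)
    (h1 : cj * g = -(g * cj)) (h2 : cj * s = s * cj) (h3 : xj * g = g * xj) :
    xj * cj * (g * s) + g * s * (xj * cj) = g * ((s * xj - xj * s) * cj) := by
  have sub1 : g * s * (xj * cj) = g * (s * xj) * cj := by noncomm_ring
  have sub2 : xj * cj * (g * s) = -(g * (xj * s) * cj) := by
    calc xj * cj * (g * s) = xj * ((cj * g) * s) := by noncomm_ring
      _ = xj * ((-(g * cj)) * s) := by rw [h1]
      _ = -(xj * g * (cj * s)) := by noncomm_ring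
      _ = -(xj * g * (s * cj)) := by rw [h2]
      _ = -((xj * g) * s * cj) := by noncomm_ring
      _ = -((g * xj) * s * cj) := by rw [h3]
      _ = -(g * (xj * s) * cj) := by noncomm_ring
  rw [sub1, sub2]; noncomm_ring

private lemma st1_conj_norm3 {A : Type*} [NonUnitalSeminormedRing A] (a w b : A) (δ : ℝ)
    (ha : ‖a‖ ≤ 1) (hb : ‖b‖ ≤ 1) (hw : ‖w‖ ≤ δ) : ‖a * w * b‖ ≤ δ := by
  have h1 : ‖a * w * b‖ ≤ ‖a * w‖ * ‖b‖ := norm_mul_le _ _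
  have h2 : ‖a * w‖ ≤ ‖a‖ * ‖w‖ := norm_mul_le _ _
  have h0 : (0:ℝ) ≤ δ := le_trans (norm_nonneg w) hw
  nlinarith [norm_nonneg a, norm_nonneg b, norm_nonneg w, norm_nonneg (a*w)]

private lemma st1_norm_dsum {n : ℕ} {A : Type*} [SeminormedAddCommGroup A]
    (f : Fin n → Fin n → A) (B : ℝ) (h : ∀ j l, ‖f j l‖ ≤ B) :
    ‖∑ j, ∑ l, f j l‖ ≤ (n:ℝ)^2 * B := by
  have hrow : ∀ j, ‖∑ l, f j l‖ ≤ (n:ℝ) * B := by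
    intro j
    calc ‖∑ l, f j l‖ ≤ ∑ l, ‖f j l‖ := norm_sum_le _ _
      _ ≤ ∑ _l : Fin n, B := Finset.sum_le_sum fun l _ => h j l
      _ = (n:ℝ) * B := by
          rw [Finset.sum_const, Finset.card_univ, Fintype.card_fin, nsmul_eq_mul]
  calc ‖∑ j, ∑ l, f j l‖ ≤ ∑ j, ‖∑ l, f j l‖ := norm_sum_le _ _
    _ ≤ ∑ _j : Fin n, ((n:ℝ) * B) := Finset.sum_le_sum fun j _ => hrow j
    _ = (n:ℝ)^2 * B := by
        rw [Finset.sum_const, Finset.card_univ, Fintype.card_fin, nsmul_eq_mul]; ring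

private lemma st1_norm_awb {A : Type*} [NonUnitalSeminormedRing A] (a w b : A) (δ : ℝ)
    (ha : ‖a‖ ≤ 2) (hb : ‖b‖ ≤ 2) (hw : ‖w‖ ≤ δ) : ‖a * (w * b)‖ ≤ 4 * δ := by
  have h1 : ‖a * (w * b)‖ ≤ ‖a‖ * ‖w * b‖ := norm_mul_le _ _
  have h2 : ‖w * b‖ ≤ ‖w‖ * ‖b‖ := norm_mul_le _ _
  have h0 : (0:ℝ) ≤ δ := le_trans (norm_nonneg w) hw
  nlinarith [norm_nonneg a, norm_nonneg b, norm_nonneg w, norm_nonneg (w*b)]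

end Stmt1Aux
set_option linter.unusedSectionVars false in
set_option maxHeartbeats 2000000 in
/-- a priori lower bound `D(κ,m)² ≥ (m² − 4d²κ²δ)·1` for `0 < m ≤ κ`. -/
theorem statement1 (d : ℕ) (hd : 1 ≤ d) {H : Type*} [NormedAddCommGroup H]
    [InnerProductSpace ℂ H] [CompleteSpace H] (cs : CliffordSystem H d)
    (U : Fin d → H →L[ℂ] H) (hU : ∀ j, U j ∈ unitary (H →L[ℂ] H))
    (hUc : ∀ j l, Commute (U j) (cs.c l)) (hUγ : ∀ j, Commute (U j) cs.γ)
    (δ : ℝ) (hδ : 0 ≤ δ) (hcomm : ∀ j l, ‖U j * U l - U l * U j‖ ≤ δ)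
    (κ m : ℝ) (hm : 0 < m) (hκ : m ≤ κ) :
    (wilsonDirac cs U κ m ^ 2 -
      ((m ^ 2 - 4 * (d : ℝ) ^ 2 * κ ^ 2 * δ : ℝ) : ℂ) • (1 : H →L[ℂ] H)).IsPositive := by
  classical
  set κ' : ℂ := (κ : ℂ) with hκ'
  set m' : ℂ := (m : ℂ) with hm'
  set X : Fin d → H →L[ℂ] H := fun j => xPart (U j) with hXdef
  set Y : Fin d → H →L[ℂ] H := fun j => yPart (U j) with hYdef
  set Z : Fin d → H →L[ℂ] H := fun j => 1 - U j with hZdef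
  set t : Fin d → H →L[ℂ] H := fun j => 1 - yPart (U j) with htdef
  have htY : ∀ j, t j = 1 - Y j := fun j => rfl
  set T : H →L[ℂ] H := ∑ j, t j with hTdef
  -- unitary facts
  have hsUU : ∀ j, star (U j) * U j = 1 := fun j => Unitary.star_mul_self_of_mem (hU j)
  have hUsU : ∀ j, U j * star (U j) = 1 := fun j => Unitary.mul_star_self_of_mem (hU j)
  -- commutation facts
  have hsUc : ∀ j l, Commute (star (U j)) (cs.c l) := by
    intro j l
    have h2 := (hUc j l).star_star
    rw [cs.c_skew l] at h2
    exact Commute.neg_right_iff.mp h2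
  have hsUγ : ∀ j, Commute (star (U j)) cs.γ := by
    intro j
    have h2 := (hUγ j).star_star
    rwa [cs.γ_sa] at h2
  have hXc : ∀ j l, Commute (X j) (cs.c l) := fun j l =>
    (((hUc j l).sub_left (hsUc j l)).smul_left _)
  have hYc : ∀ j l, Commute (Y j) (cs.c l) := fun j l =>
    (((hUc j l).add_left (hsUc j l)).smul_left _)
  have hXγ : ∀ j, Commute (X j) cs.γ := fun j =>
    (((hUγ j).sub_left (hsUγ j)).smul_left _)
  have hYγ : ∀ j, Commute (Y j) cs.γ := fun j =>
    (((hUγ j).add_left (hsUγ j)).smul_left _)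
  -- self-adjointness of the parts
  have hXsa : ∀ j, star (X j) = X j := by
    intro j
    show star (xPart (U j)) = xPart (U j)
    rw [xPart, star_smul, star_sub, star_star]
    have hI2 : ((2 * Complex.I)⁻¹ : ℂ) = -Complex.I / 2 := by
      rw [mul_inv, Complex.inv_I]; ring
    have hk : star ((2 * Complex.I)⁻¹ : ℂ) = -((2 * Complex.I)⁻¹ : ℂ) := by
      rw [hI2, Complex.star_def, map_div₀, map_neg, Complex.conj_I, Complex.conj_ofNat]
      ring
    rw [hk]
    module
  have hYsa : ∀ j, star (Y j) = Y j := by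
    intro j
    show star (yPart (U j)) = yPart (U j)
    rw [yPart, star_smul, star_add, star_star]
    have hk : star ((2 : ℂ)⁻¹) = ((2 : ℂ)⁻¹ : ℂ) := by
      rw [Complex.star_def, map_inv₀, Complex.conj_ofNat]
    rw [hk, add_comm]
  -- Clifford relations
  have hcc : ∀ j, cs.c j * cs.c j = -1 := by
    intro j
    have h := cs.c_rel j j
    rw [if_pos rfl] at h
    have h2 : (2 : ℂ) • (cs.c j * cs.c j) = (2 : ℂ) • (-1 : H →L[ℂ] H) := by
      rw [two_smul, h]
      module
    exact smul_right_injective _ two_ne_zero h2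
  have hcanti : ∀ j l, j ≠ l → cs.c l * cs.c j = -(cs.c j * cs.c l) := by
    intro j l hjl
    have h := cs.c_rel j l
    rw [if_neg hjl] at h
    exact eq_neg_of_add_eq_zero_right h
  -- x² + y² = 1
  have hxy : ∀ j, X j * X j + Y j * Y j = 1 := by
    intro j
    show xPart (U j) * xPart (U j) + yPart (U j) * yPart (U j) = 1
    rw [xPart, yPart, smul_mul_smul_comm, smul_mul_smul_comm]
    have hc1 : ((2 * Complex.I)⁻¹ * (2 * Complex.I)⁻¹ : ℂ) = -(4 : ℂ)⁻¹ := by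
      rw [← mul_inv]
      norm_num [mul_mul_mul_comm, Complex.I_mul_I]
    have hc2 : ((2 : ℂ)⁻¹ * (2 : ℂ)⁻¹) = (4 : ℂ)⁻¹ := by norm_num
    rw [hc1, hc2]
    have hQ : (U j + star (U j)) * (U j + star (U j))
        - (U j - star (U j)) * (U j - star (U j))
        = U j * star (U j) + U j * star (U j)
          + (star (U j) * U j + star (U j) * U j) := by noncomm_ring
    rw [hsUU j, hUsU j] at hQ
    have hQ' : (U j + star (U j)) * (U j + star (U j))
        = (U j - star (U j)) * (U j - star (U j)) + ((1 : H →L[ℂ] H) + 1 + (1 + 1)) := by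
      rw [← hQ]; abel
    rw [hQ']
    module
  -- the two pieces of the Wilson-Dirac operator
  set Aop : H →L[ℂ] H := κ' • ∑ j, Complex.I • (X j * cs.c j) with hAop
  set Sop : H →L[ℂ] H := κ' • (∑ j, (Y j - 1)) + m' • 1 with hSop
  have hD : wilsonDirac cs U κ m = Aop + cs.γ * Sop := rfl
  -- S = m'•1 - κ'•T
  have hSum_t : ∑ j, (Y j - 1) = -T := by
    rw [hTdef, ← Finset.sum_neg_distrib]
    exact Finset.sum_congr rfl fun j _ => by rw [htY j]; abel
  have hS2 : Sop = m' • 1 - κ' • T := by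
    rw [hSop, hSum_t]; module
  have hSγ : Commute cs.γ Sop := by
    refine Commute.add_right (Commute.smul_right ?_ _) (Commute.smul_right (Commute.one_right _) _)
    exact Commute.sum_right _ _ _ fun j _ => ((hYγ j).symm.sub_right (Commute.one_right _))
  -- B² identity
  have hB2 : (cs.γ * Sop) * (cs.γ * Sop) = (m'*m') • 1 - (2*κ'*m') • T + (κ'*κ') • (T*T) := by
    have h1 : (cs.γ * Sop) * (cs.γ * Sop) = (cs.γ * cs.γ) * (Sop * Sop) := by
      calc cs.γ * Sop * (cs.γ * Sop) = cs.γ * ((Sop * cs.γ) * Sop) := by noncomm_ring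
        _ = cs.γ * ((cs.γ * Sop) * Sop) := by rw [← hSγ.eq]
        _ = (cs.γ * cs.γ) * (Sop * Sop) := by noncomm_ring
    rw [h1, cs.γ_sq, one_mul, hS2]
    simp only [sub_mul, mul_sub, smul_mul_assoc, mul_smul_comm, smul_smul, mul_one, one_mul]
    module
  -- cross term identity
  have hCS : ∀ j : Fin d, Commute (cs.c j) Sop := by
    intro j
    refine Commute.add_right (Commute.smul_right ?_ _) (Commute.smul_right (Commute.one_right _) _)
    exact Commute.sum_right _ _ _ fun l _ => ((hYc l j).symm.sub_right (Commute.one_right _))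
  have hper : ∀ j, X j * cs.c j * (cs.γ * Sop) + cs.γ * Sop * (X j * cs.c j)
      = cs.γ * ((Sop * X j - X j * Sop) * cs.c j) := fun j =>
    st1_cross_pair _ _ _ _ (by rw [cs.γ_anticomm j, neg_neg]) (hCS j).eq ((hXγ j).eq)
  have hSX : ∀ j, Sop * X j - X j * Sop = κ' • (∑ l, (Y l * X j - X j * Y l)) := by
    intro j
    rw [hSop]
    have e : (∑ l, (Y l - 1)) * X j - X j * (∑ l, (Y l - 1))
        = ∑ l, (Y l * X j - X j * Y l) := by
      rw [Finset.sum_mul, Finset.mul_sum, ← Finset.sum_sub_distrib]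
      exact Finset.sum_congr rfl fun l _ => by noncomm_ring
    simp only [add_mul, mul_add, smul_mul_assoc, mul_smul_comm, one_mul, mul_one]
    rw [← e]
    module
  have hcross : Aop * (cs.γ * Sop) + (cs.γ * Sop) * Aop
      = (κ'*κ') • ∑ j, ∑ l,
          Complex.I • (cs.γ * ((Y l * X j - X j * Y l) * cs.c j)) := by
    rw [hAop, smul_mul_assoc, mul_smul_comm, ← smul_add, Finset.sum_mul, Finset.mul_sum,
      ← Finset.sum_add_distrib]
    have e1 : ∀ j : Fin d,
        (Complex.I • (X j * cs.c j)) * (cs.γ * Sop) + (cs.γ * Sop) * (Complex.I • (X j * cs.c j))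
          = κ' • ∑ l, Complex.I • (cs.γ * ((Y l * X j - X j * Y l) * cs.c j)) := by
      intro j
      rw [smul_mul_assoc, mul_smul_comm, ← smul_add, hper j, hSX j, smul_mul_assoc,
        mul_smul_comm, smul_comm, Finset.sum_mul, Finset.mul_sum, Finset.smul_sum]
    rw [Finset.sum_congr rfl fun j _ => e1 j, ← Finset.smul_sum, smul_smul]
  -- A² identity
  set GGop : H →L[ℂ] H := ∑ j, ∑ l, (X j * X l - X l * X j) * (cs.c j * cs.c l) with hGGop
  have hFprod : ∀ j l, (Complex.I • (X j * cs.c j)) * (Complex.I • (X l * cs.c l))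
      = -(X j * X l * (cs.c j * cs.c l)) := by
    intro j l
    rw [smul_mul_assoc, mul_smul_comm, smul_smul, Complex.I_mul_I, neg_one_smul]
    congr 1
    calc X j * cs.c j * (X l * cs.c l) = X j * (cs.c j * X l) * cs.c l := by noncomm_ring
      _ = X j * (X l * cs.c j) * cs.c l := by rw [← (hXc l j).eq]
      _ = X j * X l * (cs.c j * cs.c l) := by noncomm_ring
  have hexp : Aop * Aop = (κ'*κ') • (∑ j, ∑ l, -(X j * X l * (cs.c j * cs.c l))) := by
    rw [hAop, smul_mul_assoc, mul_smul_comm, smul_smul, Finset.sum_mul]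
    congr 1
    refine Finset.sum_congr rfl fun j _ => ?_
    rw [Finset.mul_sum]
    exact Finset.sum_congr rfl fun l _ => hFprod j l
  have hpair : ∀ j l, X j * X l * (cs.c j * cs.c l) + X l * X j * (cs.c l * cs.c j)
      = (X j * X l - X l * X j) * (cs.c j * cs.c l)
        + (if j = l then -(X j * X j) - X j * X j else 0) := by
    intro j l
    by_cases hjl : j = l
    · subst hjl
      rw [if_pos rfl, hcc j]
      noncomm_ring
    · rw [if_neg hjl, hcanti j l hjl]
      noncomm_ring
  have hdiag : (∑ j, ∑ l, (if j = l then -(X j * X j) - X j * X j else 0))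
      = -(∑ j, X j * X j) - ∑ j, X j * X j := by
    rw [← Finset.sum_neg_distrib, ← Finset.sum_sub_distrib]
    refine Finset.sum_congr rfl fun j _ => ?_
    rw [Finset.sum_ite_eq, if_pos (Finset.mem_univ j)]
  have hswap : (∑ j, ∑ l, X j * X l * (cs.c j * cs.c l))
      = ∑ j, ∑ l, X l * X j * (cs.c l * cs.c j) := Finset.sum_comm
  have hsym : (∑ j, ∑ l, X j * X l * (cs.c j * cs.c l))
        + (∑ j, ∑ l, X j * X l * (cs.c j * cs.c l))
      = GGop + (-(∑ j, X j * X j) - ∑ j, X j * X j) := by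
    nth_rewrite 2 [hswap]
    rw [← Finset.sum_add_distrib]
    rw [Finset.sum_congr rfl fun j (_ : j ∈ Finset.univ) => (Finset.sum_add_distrib).symm]
    rw [Finset.sum_congr rfl fun j (_ : j ∈ Finset.univ) =>
      (Finset.sum_congr rfl fun l (_ : l ∈ Finset.univ) => hpair j l)]
    rw [Finset.sum_congr rfl fun j (_ : j ∈ Finset.univ) => (Finset.sum_add_distrib)]
    rw [Finset.sum_add_distrib, hGGop, hdiag]
  have hFF : (∑ j, ∑ l, X j * X l * (cs.c j * cs.c l))
      = (2:ℂ)⁻¹ • GGop - ∑ j, X j * X j := by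
    refine smul_right_injective (H →L[ℂ] H) (two_ne_zero (α := ℂ)) ?_
    show (2:ℂ) • _ = (2:ℂ) • _
    rw [two_smul]
    rw [hsym]
    module
  have hA2 : Aop * Aop = (κ'*κ') • (∑ j, X j * X j) - (κ'*κ'*(2:ℂ)⁻¹) • GGop := by
    rw [hexp, Finset.sum_congr rfl fun j (_ : j ∈ Finset.univ) => (Finset.sum_neg_distrib _),
      Finset.sum_neg_distrib, hFF]
    module
  -- star Z * Z = t + t
  have hzt : ∀ j, star (Z j) * Z j = t j + t j := by
    intro j
    show star ((1 : H →L[ℂ] H) - U j) * ((1 : H →L[ℂ] H) - U j)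
      = (1 - yPart (U j)) + (1 - yPart (U j))
    have h1 : star ((1 : H →L[ℂ] H) - U j) * ((1 : H →L[ℂ] H) - U j)
        = 1 - U j - star (U j) + star (U j) * U j := by
      rw [star_sub, star_one]; noncomm_ring
    rw [h1, hsUU j, yPart]
    module
  set PPop : H →L[ℂ] H :=
    ∑ j, ∑ l, if j = l then 0 else star (Z j * Z l) * (Z j * Z l) with hPPop
  set EEop : H →L[ℂ] H :=
    ∑ j, ∑ l, if j = l then 0 else
      ((star (Z j) * star (Z l) - star (Z l) * star (Z j)) * (Z j * Z l)
        + star (Z j) * ((Z j * star (Z l) - star (Z l) * Z j) * Z l)) with hEEop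
  have htt : ∀ j l, t j * t l
      = (4:ℂ)⁻¹ • (star (Z j * Z l) * (Z j * Z l)
        + ((star (Z j) * star (Z l) - star (Z l) * star (Z j)) * (Z j * Z l)
          + star (Z j) * ((Z j * star (Z l) - star (Z l) * Z j) * Z l))) := by
    intro j l
    refine smul_right_injective (H →L[ℂ] H) (by norm_num : (4:ℂ) ≠ 0) ?_
    show (4:ℂ) • _ = (4:ℂ) • _
    have h4 : (4:ℂ) • (t j * t l) = (t j + t j) * (t l + t l) := by
      have e : (t j + t j) * (t l + t l) = t j * t l + t j * t l + (t j * t l + t j * t l) := by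
        noncomm_ring
      rw [e]; module
    rw [h4, ← hzt j, ← hzt l, st1_ztrick, smul_smul]
    norm_num
  -- T² split into diagonal and off-diagonal
  have hsplit : T * T = (∑ j, t j * t j) + ∑ j, ∑ l, (if j = l then 0 else t j * t l) := by
    rw [hTdef, Finset.sum_mul, ← Finset.sum_add_distrib]
    refine Finset.sum_congr rfl fun j _ => ?_
    rw [Finset.mul_sum]
    have e : ∀ l : Fin d, t j * t l
        = (if j = l then t j * t l else 0) + (if j = l then 0 else t j * t l) := by
      intro l; by_cases h : j = l <;> simp [h]
    rw [Finset.sum_congr rfl fun l _ => e l, Finset.sum_add_distrib, Finset.sum_ite_eq,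
      if_pos (Finset.mem_univ j)]
  have hoff : (∑ j, ∑ l, if j = l then 0 else t j * t l) = (4:ℂ)⁻¹ • (PPop + EEop) := by
    have e : ∀ j l : Fin d, (if j = l then 0 else t j * t l)
        = (4:ℂ)⁻¹ • ((if j = l then 0 else star (Z j * Z l) * (Z j * Z l))
          + (if j = l then 0 else
            ((star (Z j) * star (Z l) - star (Z l) * star (Z j)) * (Z j * Z l)
              + star (Z j) * ((Z j * star (Z l) - star (Z l) * Z j) * Z l)))) := by
      intro j l
      by_cases h : j = l
      · simp [h]
      · rw [if_neg h, if_neg h, if_neg h]; exact htt j l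
    rw [Finset.sum_congr rfl fun j (_ : j ∈ Finset.univ) =>
      Finset.sum_congr rfl fun l (_ : l ∈ Finset.univ) => e j l]
    rw [Finset.sum_congr rfl fun j (_ : j ∈ Finset.univ) => (Finset.smul_sum).symm,
      ← Finset.smul_sum]
    congr 1
    rw [← Finset.sum_add_distrib]
    exact Finset.sum_congr rfl fun j _ => Finset.sum_add_distrib
  -- Σ x² = T + T - Σ t²
  have hx2t : (∑ j, X j * X j) = T + T - ∑ j, t j * t j := by
    rw [hTdef, ← Finset.sum_add_distrib, ← Finset.sum_sub_distrib]
    refine Finset.sum_congr rfl fun j _ => ?_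
    have h1 : X j * X j = 1 - Y j * Y j := eq_sub_of_add_eq (hxy j)
    rw [htY j, h1]
    noncomm_ring
  -- name the cross sum
  set CRop : H →L[ℂ] H :=
    ∑ j, ∑ l, Complex.I • (cs.γ * ((Y l * X j - X j * Y l) * cs.c j)) with hCRop
  -- MASTER IDENTITY
  have master : wilsonDirac cs U κ m * wilsonDirac cs U κ m
      = (m'*m') • (1 : H →L[ℂ] H) + (2*κ'*(κ'-m')) • T + (κ'*κ'*(4:ℂ)⁻¹) • PPop
        + ((κ'*κ'*(4:ℂ)⁻¹) • EEop - (κ'*κ'*(2:ℂ)⁻¹) • GGop + (κ'*κ') • CRop) := by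
    rw [hD]
    have hsq : (Aop + cs.γ * Sop) * (Aop + cs.γ * Sop)
        = Aop * Aop + (Aop * (cs.γ * Sop) + (cs.γ * Sop) * Aop)
          + (cs.γ * Sop) * (cs.γ * Sop) := by noncomm_ring
    rw [hsq, hA2, hcross, hB2, hx2t]
    have hTT : T * T = (∑ j, t j * t j) + (4:ℂ)⁻¹ • (PPop + EEop) := by rw [hsplit, hoff]
    rw [hTT]
    module
  -- elementary norm facts
  have hZe : ∀ j, Z j = 1 - U j := fun _ => rfl
  have hsZ : ∀ j, star (Z j) = 1 - star (U j) := fun j => by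
    rw [hZe j, star_sub, star_one]
  have hnU : ∀ j, ‖U j‖ ≤ 1 := fun j => st1_norm_le_one_of_unitary _ (hU j)
  have hnsU : ∀ j, ‖star (U j)‖ ≤ 1 := fun j => by rw [norm_star]; exact hnU j
  have hnone : ‖(1 : H →L[ℂ] H)‖ ≤ 1 := ContinuousLinearMap.norm_id_le
  have hnZ : ∀ j, ‖Z j‖ ≤ 2 := by
    intro j
    rw [hZe j]
    calc ‖(1 : H →L[ℂ] H) - U j‖ ≤ ‖(1 : H →L[ℂ] H)‖ + ‖U j‖ := norm_sub_le _ _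
      _ ≤ 2 := by linarith [hnU j]
  have hnsZ : ∀ j, ‖star (Z j)‖ ≤ 2 := fun j => by rw [norm_star]; exact hnZ j
  have hnC : ∀ j, ‖cs.c j‖ ≤ 1 := by
    intro j
    have h : star (cs.c j) * cs.c j = 1 := by
      rw [cs.c_skew j, neg_mul, hcc j, neg_neg]
    have h2 : ‖cs.c j‖ * ‖cs.c j‖ = ‖(1 : H →L[ℂ] H)‖ := by
      rw [← CStarRing.norm_star_mul_self, h]
    nlinarith [norm_nonneg (cs.c j)]
  have hnG : ‖cs.γ‖ ≤ 1 := by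
    have h : star cs.γ * cs.γ = 1 := by rw [cs.γ_sa, cs.γ_sq]
    have h2 : ‖cs.γ‖ * ‖cs.γ‖ = ‖(1 : H →L[ℂ] H)‖ := by
      rw [← CStarRing.norm_star_mul_self, h]
    nlinarith [norm_nonneg cs.γ]
  -- commutator norm bounds
  have hUsUc : ∀ j l, ‖U j * star (U l) - star (U l) * U j‖ ≤ δ := by
    intro j l
    have key : U j * star (U l) - star (U l) * U j
        = star (U l) * (U l * U j - U j * U l) * star (U l) := by
      have e : star (U l) * (U l * U j - U j * U l) * star (U l)
          = (star (U l) * U l) * (U j * star (U l))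
            - star (U l) * U j * (U l * star (U l)) := by noncomm_ring
      rw [e, hsUU l, hUsU l, one_mul, mul_one]
    rw [key]
    exact st1_conj_norm3 _ _ _ δ (hnsU l) (hnsU l) (hcomm l j)
  have hsUsU : ∀ j l, ‖star (U j) * star (U l) - star (U l) * star (U j)‖ ≤ δ := by
    intro j l
    have e : star (U j) * star (U l) - star (U l) * star (U j)
        = star (U l * U j - U j * U l) := by
      rw [star_sub, star_mul, star_mul]
    rw [e, norm_star]
    exact hcomm l j
  have hrev : ∀ a b : H →L[ℂ] H, ‖a - b‖ = ‖b - a‖ := fun a b => by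
    rw [← norm_neg, neg_sub]
  have hquarter : ‖((2 * Complex.I)⁻¹ * (2 * Complex.I)⁻¹ : ℂ)‖ = 1/4 := by
    simp [norm_mul, norm_inv, Complex.norm_I]
    norm_num
  have hXX : ∀ j l, ‖X j * X l - X l * X j‖ ≤ δ := by
    intro j l
    have e : X j * X l - X l * X j
        = ((2 * Complex.I)⁻¹ * (2 * Complex.I)⁻¹ : ℂ)
            • ((U j - star (U j)) * (U l - star (U l))
              - (U l - star (U l)) * (U j - star (U j))) := by
      show xPart (U j) * xPart (U l) - xPart (U l) * xPart (U j) = _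
      simp only [xPart]
      rw [smul_mul_smul_comm, smul_mul_smul_comm, ← smul_sub]
    have hW : (U j - star (U j)) * (U l - star (U l))
          - (U l - star (U l)) * (U j - star (U j))
        = (U j * U l - U l * U j) - (U j * star (U l) - star (U l) * U j)
          - (star (U j) * U l - U l * star (U j))
          + (star (U j) * star (U l) - star (U l) * star (U j)) := by noncomm_ring
    have h3 : ‖star (U j) * U l - U l * star (U j)‖ ≤ δ := by
      rw [hrev]; exact hUsUc l j
    have hWn : ‖(U j - star (U j)) * (U l - star (U l))
        - (U l - star (U l)) * (U j - star (U j))‖ ≤ 4 * δ := by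
      rw [hW]
      have n1 := norm_add_le ((U j * U l - U l * U j) - (U j * star (U l) - star (U l) * U j)
          - (star (U j) * U l - U l * star (U j)))
          (star (U j) * star (U l) - star (U l) * star (U j))
      have n2 := norm_sub_le ((U j * U l - U l * U j) - (U j * star (U l) - star (U l) * U j))
          (star (U j) * U l - U l * star (U j))
      have n3 := norm_sub_le (U j * U l - U l * U j) (U j * star (U l) - star (U l) * U j)
      have b1 := hcomm j l
      have b2 := hUsUc j l
      have b4 := hsUsU j l
      linarith
    rw [e, norm_smul, hquarter]
    linarith
  have hYX : ∀ j l, ‖Y l * X j - X j * Y l‖ ≤ δ := by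
    intro j l
    have e : Y l * X j - X j * Y l
        = ((2:ℂ)⁻¹ * (2 * Complex.I)⁻¹ : ℂ)
            • ((U l + star (U l)) * (U j - star (U j))
              - (U j - star (U j)) * (U l + star (U l))) := by
      show yPart (U l) * xPart (U j) - xPart (U j) * yPart (U l) = _
      simp only [xPart, yPart]
      rw [smul_mul_smul_comm, smul_mul_smul_comm,
        mul_comm ((2 * Complex.I)⁻¹ : ℂ) ((2:ℂ)⁻¹), ← smul_sub]
    have hW : (U l + star (U l)) * (U j - star (U j))
          - (U j - star (U j)) * (U l + star (U l))
        = (U l * U j - U j * U l) - (U l * star (U j) - star (U j) * U l)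
          + (star (U l) * U j - U j * star (U l))
          - (star (U l) * star (U j) - star (U j) * star (U l)) := by noncomm_ring
    have h3 : ‖star (U l) * U j - U j * star (U l)‖ ≤ δ := by
      rw [hrev]; exact hUsUc j l
    have hWn : ‖(U l + star (U l)) * (U j - star (U j))
        - (U j - star (U j)) * (U l + star (U l))‖ ≤ 4 * δ := by
      rw [hW]
      have n1 := norm_sub_le ((U l * U j - U j * U l) - (U l * star (U j) - star (U j) * U l)
          + (star (U l) * U j - U j * star (U l)))
          (star (U l) * star (U j) - star (U j) * star (U l))
      have n2 := norm_add_le ((U l * U j - U j * U l) - (U l * star (U j) - star (U j) * U l))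
          (star (U l) * U j - U j * star (U l))
      have n3 := norm_sub_le (U l * U j - U j * U l) (U l * star (U j) - star (U j) * U l)
      have b1 := hcomm l j
      have b2 := hUsUc l j
      have b4 := hsUsU l j
      linarith
    have hq2 : ‖((2:ℂ)⁻¹ * (2 * Complex.I)⁻¹ : ℂ)‖ = 1/4 := by
      simp [norm_mul, norm_inv, Complex.norm_I]
      norm_num
    rw [e, norm_smul, hq2]
    linarith
  -- norms of the three error sums
  have hnEE : ‖EEop‖ ≤ (d:ℝ)^2 * (8*δ) := by
    rw [hEEop]
    refine st1_norm_dsum _ _ ?_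
    intro j l
    by_cases h : j = l
    · rw [if_pos h, norm_zero]; positivity
    · rw [if_neg h]
      have e1 : star (Z j) * star (Z l) - star (Z l) * star (Z j)
          = star (U j) * star (U l) - star (U l) * star (U j) := by
        rw [hsZ j, hsZ l]; noncomm_ring
      have e2 : Z j * star (Z l) - star (Z l) * Z j
          = U j * star (U l) - star (U l) * U j := by
        rw [hZe j, hsZ l]; noncomm_ring
      have n1 : ‖(star (Z j) * star (Z l) - star (Z l) * star (Z j)) * (Z j * Z l)‖ ≤ 4*δ := by
        calc ‖(star (Z j) * star (Z l) - star (Z l) * star (Z j)) * (Z j * Z l)‖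
            ≤ ‖star (Z j) * star (Z l) - star (Z l) * star (Z j)‖ * ‖Z j * Z l‖ :=
              norm_mul_le _ _
          _ ≤ 4*δ := by
              have b1 : ‖star (Z j) * star (Z l) - star (Z l) * star (Z j)‖ ≤ δ := by
                rw [e1]; exact hsUsU j l
              have b2 : ‖Z j * Z l‖ ≤ 4 := by
                calc ‖Z j * Z l‖ ≤ ‖Z j‖ * ‖Z l‖ := norm_mul_le _ _
                  _ ≤ 4 := by nlinarith [hnZ j, hnZ l, norm_nonneg (Z j), norm_nonneg (Z l)]
              nlinarith [norm_nonneg (star (Z j) * star (Z l) - star (Z l) * star (Z j)),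
                norm_nonneg (Z j * Z l)]
      have n2 : ‖star (Z j) * ((Z j * star (Z l) - star (Z l) * Z j) * Z l)‖ ≤ 4*δ := by
        have b1 : ‖Z j * star (Z l) - star (Z l) * Z j‖ ≤ δ := by rw [e2]; exact hUsUc j l
        exact st1_norm_awb _ _ _ δ (hnsZ j) (hnZ l) b1
      calc ‖(star (Z j) * star (Z l) - star (Z l) * star (Z j)) * (Z j * Z l)
            + star (Z j) * ((Z j * star (Z l) - star (Z l) * Z j) * Z l)‖
          ≤ ‖(star (Z j) * star (Z l) - star (Z l) * star (Z j)) * (Z j * Z l)‖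
            + ‖star (Z j) * ((Z j * star (Z l) - star (Z l) * Z j) * Z l)‖ := norm_add_le _ _
        _ ≤ 8*δ := by linarith
  have hnGG : ‖GGop‖ ≤ (d:ℝ)^2 * δ := by
    rw [hGGop]
    refine st1_norm_dsum _ _ ?_
    intro j l
    calc ‖(X j * X l - X l * X j) * (cs.c j * cs.c l)‖
        ≤ ‖X j * X l - X l * X j‖ * ‖cs.c j * cs.c l‖ := norm_mul_le _ _
      _ ≤ δ := by
          have b1 := hXX j l
          have b2 : ‖cs.c j * cs.c l‖ ≤ 1 := by
            calc ‖cs.c j * cs.c l‖ ≤ ‖cs.c j‖ * ‖cs.c l‖ := norm_mul_le _ _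
              _ ≤ 1 := by nlinarith [hnC j, hnC l, norm_nonneg (cs.c j), norm_nonneg (cs.c l)]
          nlinarith [norm_nonneg (X j * X l - X l * X j), norm_nonneg (cs.c j * cs.c l)]
  have hnCR : ‖CRop‖ ≤ (d:ℝ)^2 * δ := by
    rw [hCRop]
    refine st1_norm_dsum _ _ ?_
    intro j l
    rw [norm_smul, Complex.norm_I, one_mul]
    calc ‖cs.γ * ((Y l * X j - X j * Y l) * cs.c j)‖
        ≤ ‖cs.γ‖ * ‖(Y l * X j - X j * Y l) * cs.c j‖ := norm_mul_le _ _
      _ ≤ δ := by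
          have b1 : ‖(Y l * X j - X j * Y l) * cs.c j‖ ≤ δ := by
            calc ‖(Y l * X j - X j * Y l) * cs.c j‖
                ≤ ‖Y l * X j - X j * Y l‖ * ‖cs.c j‖ := norm_mul_le _ _
              _ ≤ δ := by
                  nlinarith [hYX j l, hnC j, norm_nonneg (Y l * X j - X j * Y l),
                    norm_nonneg (cs.c j)]
          nlinarith [hnG, norm_nonneg cs.γ, norm_nonneg ((Y l * X j - X j * Y l) * cs.c j),
            le_trans (norm_nonneg _) b1]
  -- self-adjointness of D
  have hAsa : star Aop = Aop := by
    rw [hAop, star_smul, star_sum]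
    have e : ∀ j : Fin d, star (Complex.I • (X j * cs.c j)) = Complex.I • (X j * cs.c j) := by
      intro j
      rw [star_smul, star_mul, hXsa j, cs.c_skew j,
        show star Complex.I = -Complex.I from by simp,
        neg_mul, smul_neg, neg_smul, neg_neg, ← (hXc j j).eq]
    rw [Finset.sum_congr rfl fun j _ => e j, hκ']
    norm_num
  have hSsa : star Sop = Sop := by
    rw [hSop, star_add, star_smul, star_smul, star_one, star_sum]
    have e : ∀ j : Fin d, star (Y j - 1) = Y j - 1 := by
      intro j; rw [star_sub, star_one, hYsa j]
    rw [Finset.sum_congr rfl fun j _ => e j, hκ', hm']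
    norm_num
  have hBsa : star (cs.γ * Sop) = cs.γ * Sop := by
    rw [star_mul, hSsa, cs.γ_sa, ← hSγ.eq]
  have hDsa : IsSelfAdjoint (wilsonDirac cs U κ m) := by
    rw [isSelfAdjoint_iff, hD, star_add, hAsa, hBsa]
  -- final assembly
  refine ⟨?_, ?_⟩
  · have h2 : IsSelfAdjoint (wilsonDirac cs U κ m ^ 2) := hDsa.pow 2
    have h3 : IsSelfAdjoint
        (((m ^ 2 - 4 * (d : ℝ) ^ 2 * κ ^ 2 * δ : ℝ) : ℂ) • (1 : H →L[ℂ] H)) := by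
      rw [isSelfAdjoint_iff, star_smul, star_one]
      norm_num
    exact (h2.sub h3).isSymmetric
  · intro v
    rw [ContinuousLinearMap.reApplyInnerSelf_apply]
    have hop : wilsonDirac cs U κ m ^ 2
          - ((m ^ 2 - 4 * (d : ℝ) ^ 2 * κ ^ 2 * δ : ℝ) : ℂ) • (1 : H →L[ℂ] H)
        = ((4 * (d : ℝ) ^ 2 * κ ^ 2 * δ : ℝ) : ℂ) • (1 : H →L[ℂ] H)
          + (((2 * κ * (κ - m) : ℝ)) : ℂ) • T
          + (((κ ^ 2 / 4 : ℝ)) : ℂ) • PPop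
          + ((κ'*κ'*(4:ℂ)⁻¹) • EEop - (κ'*κ'*(2:ℂ)⁻¹) • GGop + (κ'*κ') • CRop) := by
      rw [pow_two, master, hκ', hm']
      push_cast
      module
    rw [hop]
    rw [st1_re_add, st1_re_add, st1_re_add, st1_re_smul, st1_re_smul, st1_re_smul]
    have h1v : RCLike.re (@inner ℂ H _ ((1 : H →L[ℂ] H) v) v) = ‖v‖ ^ 2 := by
      rw [ContinuousLinearMap.one_apply, inner_self_eq_norm_sq]
    rw [h1v]
    -- positivity of T and PP quadratic forms
    have hT0 : 0 ≤ RCLike.re (@inner ℂ H _ (T v) v) := by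
      rw [hTdef, st1_re_sum]
      refine Finset.sum_nonneg fun j _ => ?_
      have h := st1_re_star_mul (Z j) v
      rw [hzt j, st1_re_add] at h
      nlinarith [sq_nonneg ‖Z j v‖]
    have hPP0 : 0 ≤ RCLike.re (@inner ℂ H _ (PPop v) v) := by
      rw [hPPop, st1_re_sum]
      refine Finset.sum_nonneg fun j _ => ?_
      rw [st1_re_sum]
      refine Finset.sum_nonneg fun l _ => ?_
      by_cases h : j = l
      · rw [if_pos h]
        simp
      · rw [if_neg h, st1_re_star_mul]
        positivity
    -- error term bound
    have hEbound : ‖(κ'*κ'*(4:ℂ)⁻¹) • EEop - (κ'*κ'*(2:ℂ)⁻¹) • GGop + (κ'*κ') • CRop‖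
        ≤ 7/2 * ((d:ℝ)^2 * κ^2 * δ) := by
      have hs1 : ‖(κ'*κ'*(4:ℂ)⁻¹) • EEop‖ ≤ κ^2/4 * ((d:ℝ)^2 * (8*δ)) := by
        rw [norm_smul]
        have hc : ‖(κ'*κ'*(4:ℂ)⁻¹ : ℂ)‖ = κ^2/4 := by
          rw [hκ']
          have : ((κ:ℂ) * (κ:ℂ) * (4:ℂ)⁻¹) = ((κ^2/4 : ℝ) : ℂ) := by push_cast; ring
          rw [this, Complex.norm_real, Real.norm_eq_abs, abs_of_nonneg (by positivity)]
        rw [hc]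
        have := hnEE
        nlinarith [norm_nonneg EEop, sq_nonneg κ]
      have hs2 : ‖(κ'*κ'*(2:ℂ)⁻¹) • GGop‖ ≤ κ^2/2 * ((d:ℝ)^2 * δ) := by
        rw [norm_smul]
        have hc : ‖(κ'*κ'*(2:ℂ)⁻¹ : ℂ)‖ = κ^2/2 := by
          rw [hκ']
          have : ((κ:ℂ) * (κ:ℂ) * (2:ℂ)⁻¹) = ((κ^2/2 : ℝ) : ℂ) := by push_cast; ring
          rw [this, Complex.norm_real, Real.norm_eq_abs, abs_of_nonneg (by positivity)]
        rw [hc]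
        have := hnGG
        nlinarith [norm_nonneg GGop, sq_nonneg κ]
      have hs3 : ‖(κ'*κ') • CRop‖ ≤ κ^2 * ((d:ℝ)^2 * δ) := by
        rw [norm_smul]
        have hc : ‖(κ'*κ' : ℂ)‖ = κ^2 := by
          rw [hκ']
          have : ((κ:ℂ) * (κ:ℂ)) = ((κ^2 : ℝ) : ℂ) := by push_cast; ring
          rw [this, Complex.norm_real, Real.norm_eq_abs, abs_of_nonneg (by positivity)]
        rw [hc]
        have := hnCR
        nlinarith [norm_nonneg CRop, sq_nonneg κ]
      calc ‖(κ'*κ'*(4:ℂ)⁻¹) • EEop - (κ'*κ'*(2:ℂ)⁻¹) • GGop + (κ'*κ') • CRop‖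
          ≤ ‖(κ'*κ'*(4:ℂ)⁻¹) • EEop - (κ'*κ'*(2:ℂ)⁻¹) • GGop‖ + ‖(κ'*κ') • CRop‖ :=
            norm_add_le _ _
        _ ≤ ‖(κ'*κ'*(4:ℂ)⁻¹) • EEop‖ + ‖(κ'*κ'*(2:ℂ)⁻¹) • GGop‖ + ‖(κ'*κ') • CRop‖ := by
            have := norm_sub_le ((κ'*κ'*(4:ℂ)⁻¹) • EEop) ((κ'*κ'*(2:ℂ)⁻¹) • GGop)
            linarith
        _ ≤ 7/2 * ((d:ℝ)^2 * κ^2 * δ) := by linarith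
    have hEre := st1_re_ge
      ((κ'*κ'*(4:ℂ)⁻¹) • EEop - (κ'*κ'*(2:ℂ)⁻¹) • GGop + (κ'*κ') • CRop) v
    have hvnn : (0:ℝ) ≤ ‖v‖^2 := sq_nonneg _
    have hc1 : (0:ℝ) ≤ 2 * κ * (κ - m) := by nlinarith
    have hc2 : (0:ℝ) ≤ κ^2/4 := by positivity
    have hdd : (0:ℝ) ≤ (d:ℝ)^2 * κ^2 * δ := by positivity
    have hEn : -(7/2 * ((d:ℝ)^2 * κ^2 * δ) * ‖v‖^2)
        ≤ RCLike.re (@inner ℂ H _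
          (((κ'*κ'*(4:ℂ)⁻¹) • EEop - (κ'*κ'*(2:ℂ)⁻¹) • GGop + (κ'*κ') • CRop) v) v) := by
      have hmono : ‖(κ'*κ'*(4:ℂ)⁻¹) • EEop - (κ'*κ'*(2:ℂ)⁻¹) • GGop + (κ'*κ') • CRop‖ * ‖v‖^2
          ≤ 7/2 * ((d:ℝ)^2 * κ^2 * δ) * ‖v‖^2 :=
        mul_le_mul_of_nonneg_right hEbound hvnn
      linarith
    linarith [mul_nonneg hc1 hT0, mul_nonneg hc2 hPP0, mul_nonneg hdd hvnn, hEn]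
end

section
/- Fix an integer d ≥ 1, a real number m with 0 < m < 2, a complex Hilbert space H, and a Clifford system (c_1, …, c_d, γ) on H. Then for every k = (k_1, …, k_d) ∈ ℝ^d the operator Σ_{j=1}^d i·sin(2π k_j)·c_j + (Σ_{j=1}^d (cos(2π k_j) − 1) + m)·γ is self-adjoint and invertible; indeed its square equals f_m(k)²·1 with f_m(k)² > 0. -/
section Aux

variable {H : Type*} [NormedAddCommGroup H] [InnerProductSpace ℂ H] [CompleteSpace H]

lemma clifford_sq' {d : ℕ} (cs : CliffordSystem H d) (s : Fin d → ℝ) (M : ℝ) :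
    (∑ j, (Complex.I * (s j : ℂ)) • cs.c j + ((M : ℝ) : ℂ) • cs.γ) ^ 2
      = (((∑ j, s j ^ 2 + M ^ 2 : ℝ)) : ℂ) • (1 : H →L[ℂ] H) := by
  set a : Fin d → ℂ := fun j => Complex.I * (s j : ℂ) with ha
  set A : H →L[ℂ] H := ∑ j, a j • cs.c j with hA
  set B : H →L[ℂ] H := ((M : ℝ) : ℂ) • cs.γ with hB
  have hcross : A * B + B * A = 0 := by
    rw [hA, hB, Finset.sum_mul, Finset.mul_sum, ← Finset.sum_add_distrib]
    refine Finset.sum_eq_zero fun j _ => ?_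
    rw [smul_mul_assoc, mul_smul_comm, smul_mul_assoc, mul_smul_comm,
      cs.γ_anticomm j]
    module
  have hAA : A * A = (-(∑ j, a j ^ 2)) • (1 : H →L[ℂ] H) := by
    have e1 : A * A = ∑ j, ∑ l, (a j * a l) • (cs.c j * cs.c l) := by
      rw [hA, Finset.sum_mul]
      refine Finset.sum_congr rfl fun j _ => ?_
      rw [Finset.mul_sum]
      refine Finset.sum_congr rfl fun l _ => ?_
      rw [smul_mul_assoc, mul_smul_comm, smul_smul]
    have e2 : A * A = ∑ j, ∑ l, (a j * a l) • (cs.c l * cs.c j) := by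
      rw [e1, Finset.sum_comm]
      refine Finset.sum_congr rfl fun j _ => Finset.sum_congr rfl fun l _ => ?_
      rw [mul_comm (a l) (a j)]
    have hdouble : A * A + A * A
        = ((2:ℂ)) • ((-(∑ j, a j ^ 2)) • (1 : H →L[ℂ] H)) := by
      calc A * A + A * A
          = (∑ j, ∑ l, (a j * a l) • (cs.c j * cs.c l))
              + (∑ j, ∑ l, (a j * a l) • (cs.c l * cs.c j)) := by rw [← e1, ← e2]
        _ = ∑ j, ∑ l, ((a j * a l) • (cs.c j * cs.c l)
              + (a j * a l) • (cs.c l * cs.c j)) := by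
            rw [← Finset.sum_add_distrib]
            exact Finset.sum_congr rfl fun j _ => Finset.sum_add_distrib.symm
        _ = ∑ j, ∑ l, (a j * a l) • (if j = l then (-2 : ℂ) • (1 : H →L[ℂ] H) else 0) := by
            refine Finset.sum_congr rfl fun j _ => Finset.sum_congr rfl fun l _ => ?_
            rw [← smul_add, cs.c_rel j l]
        _ = ∑ j, (a j * a j) • ((-2 : ℂ) • (1 : H →L[ℂ] H)) := by
            refine Finset.sum_congr rfl fun j _ => ?_
            have hz : ∀ l ∈ Finset.univ, l ≠ j →
                (a j * a l) • (if j = l then ((-2:ℂ) • (1 : H →L[ℂ] H)) else 0) = 0 := by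
              intro l _ hl
              rw [if_neg (fun h => hl h.symm), smul_zero]
            rw [Finset.sum_eq_single_of_mem j (Finset.mem_univ j) hz, if_pos rfl]
        _ = ∑ j, (a j * a j * (-2 : ℂ)) • (1 : H →L[ℂ] H) := by
            exact Finset.sum_congr rfl fun j _ => (smul_smul _ _ _)
        _ = (∑ j, (a j * a j * (-2 : ℂ))) • (1 : H →L[ℂ] H) := (Finset.sum_smul).symm
        _ = ((2:ℂ)) • ((-(∑ j, a j ^ 2)) • (1 : H →L[ℂ] H)) := by
            rw [smul_smul]
            congr 1
            calc ∑ j, a j * a j * (-2:ℂ) = ∑ j, (-2:ℂ) * a j ^ 2 :=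
                  Finset.sum_congr rfl fun j _ => by ring
              _ = (-2:ℂ) * ∑ j, a j ^ 2 := (Finset.mul_sum _ _ _).symm
              _ = (2:ℂ) * -∑ j, a j ^ 2 := by ring
    rw [← two_smul ℂ (A * A)] at hdouble
    exact smul_right_injective _ (two_ne_zero) hdouble
  have hBB : B * B = (((M:ℝ):ℂ)^2) • (1 : H →L[ℂ] H) := by
    rw [hB, smul_mul_assoc, mul_smul_comm, cs.γ_sq, smul_smul, sq]
  have hasq : ∀ j, a j ^ 2 = -(((s j : ℝ) : ℂ) ^ 2) := by
    intro j
    rw [ha]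
    simp only [mul_pow, Complex.I_sq]
    ring
  calc (A + B) ^ 2 = A * A + (A * B + B * A) + B * B := by noncomm_ring
    _ = (-(∑ j, a j ^ 2)) • (1 : H →L[ℂ] H) + 0 + (((M:ℝ):ℂ)^2) • (1 : H →L[ℂ] H) := by
        rw [hAA, hcross, hBB]
    _ = (((∑ j, s j ^ 2 + M ^ 2 : ℝ)) : ℂ) • (1 : H →L[ℂ] H) := by
        rw [add_zero, ← add_smul]
        congr 1
        have : ∑ j, a j ^ 2 = ∑ j, -(((s j : ℝ) : ℂ) ^ 2) :=
          Finset.sum_congr rfl fun j _ => hasq j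
        rw [this]
        push_cast
        rw [Finset.sum_neg_distrib]
        ring

lemma fmSq_pos' (d : ℕ) (m : ℝ) (hm0 : 0 < m) (hm2 : m < 2) (k : Fin d → ℝ) :
    0 < fmSq d m k := by
  unfold fmSq
  set t : Fin d → ℝ := fun j => Real.cos (2 * Real.pi * k j) - 1 with ht
  have hs : 0 ≤ ∑ j, Real.sin (2 * Real.pi * k j) ^ 2 :=
    Finset.sum_nonneg fun j _ => sq_nonneg _
  rcases lt_or_eq_of_le hs with hpos | hzero
  · have : 0 ≤ (∑ j, t j + m) ^ 2 := sq_nonneg _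
    linarith
  · have hsin : ∀ j : Fin d, Real.sin (2 * Real.pi * k j) ^ 2 = 0 := by
      intro j
      have := (Finset.sum_eq_zero_iff_of_nonneg (fun j _ => sq_nonneg _)).mp hzero.symm
      exact this j (Finset.mem_univ j)
    have htj : ∀ j, t j = 0 ∨ t j = -2 := by
      intro j
      have hpy := Real.sin_sq_add_cos_sq (2 * Real.pi * k j)
      have hc : Real.cos (2 * Real.pi * k j) ^ 2 = 1 := by
        have := hsin j; nlinarith
      have : (t j) * (t j + 2) = 0 := by
        show (Real.cos (2 * Real.pi * k j) - 1) *
          ((Real.cos (2 * Real.pi * k j) - 1) + 2) = 0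
        nlinarith
      rcases mul_eq_zero.mp this with h | h
      · exact Or.inl h
      · exact Or.inr (by linarith)
    have hne : (∑ j, t j + m) ≠ 0 := by
      intro hcontra
      have hsum : ∑ j, t j = -m := by linarith
      by_cases hall : ∀ j, t j = 0
      · have : ∑ j, t j = 0 := Finset.sum_eq_zero fun j _ => hall j
        linarith
      · push_neg at hall
        obtain ⟨j₀, hj₀⟩ := hall
        have hj₀2 : t j₀ = -2 := (htj j₀).resolve_left hj₀
        have hrest : ∑ j ∈ Finset.univ.erase j₀, t j ≤ 0 :=
          Finset.sum_nonpos fun j _ => by rcases htj j with h | h <;> linarith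
        have hsplit : t j₀ + ∑ j ∈ Finset.univ.erase j₀, t j = ∑ j, t j :=
          Finset.add_sum_erase _ _ (Finset.mem_univ j₀)
        linarith
    have : 0 < (∑ j, t j + m) ^ 2 := by positivity
    linarith

end Aux


/-- pointwise invertibility of the universal massive hermitian
Wilson--Dirac operator, identified with a matrix-valued function on the torus. -/
theorem statement2 (d : ℕ) (hd : 1 ≤ d) (m : ℝ) (hm0 : 0 < m) (hm2 : m < 2)
    {H : Type*} [NormedAddCommGroup H] [InnerProductSpace ℂ H] [CompleteSpace H]
    (cs : CliffordSystem H d) (k : Fin d → ℝ) :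
    let h : H →L[ℂ] H :=
      ∑ j, (Complex.I * (Real.sin (2 * Real.pi * k j) : ℂ)) • cs.c j +
        ((∑ j, (Real.cos (2 * Real.pi * k j) - 1) + m : ℝ) : ℂ) • cs.γ
    IsSelfAdjoint h ∧ IsUnit h ∧
      h ^ 2 = ((fmSq d m k : ℝ) : ℂ) • (1 : H →L[ℂ] H) ∧ 0 < fmSq d m k := by
  intro h
  have hh : h = ∑ j, (Complex.I * (Real.sin (2 * Real.pi * k j) : ℂ)) • cs.c j +
      ((∑ j, (Real.cos (2 * Real.pi * k j) - 1) + m : ℝ) : ℂ) • cs.γ := rfl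
  have hsq : h ^ 2 = ((fmSq d m k : ℝ) : ℂ) • (1 : H →L[ℂ] H) := by
    rw [hh, clifford_sq' cs (fun j => Real.sin (2 * Real.pi * k j))
      (∑ j, (Real.cos (2 * Real.pi * k j) - 1) + m)]
    rfl
  have hpos : 0 < fmSq d m k := fmSq_pos' d m hm0 hm2 k
  have hne : ((fmSq d m k : ℝ) : ℂ) ≠ 0 := by
    exact_mod_cast ne_of_gt hpos
  have hsa : IsSelfAdjoint h := by
    rw [IsSelfAdjoint, hh]
    simp only [star_add, star_sum, star_smul, star_mul', Complex.star_def,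
      Complex.conj_I, Complex.conj_ofReal, cs.c_skew, cs.γ_sa, smul_neg,
      neg_smul, neg_mul, neg_neg, map_mul]
  have hunit : IsUnit h := by
    refine isUnit_iff_exists.mpr ⟨(((fmSq d m k : ℝ) : ℂ))⁻¹ • h, ?_, ?_⟩
    · calc h * ((((fmSq d m k : ℝ) : ℂ))⁻¹ • h)
          = (((fmSq d m k : ℝ) : ℂ))⁻¹ • (h * h) := mul_smul_comm _ _ _
        _ = (((fmSq d m k : ℝ) : ℂ))⁻¹ • (((fmSq d m k : ℝ) : ℂ) • 1) := by
            rw [← sq, hsq]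
        _ = 1 := by rw [smul_smul, inv_mul_cancel₀ hne, one_smul]
    · calc ((((fmSq d m k : ℝ) : ℂ))⁻¹ • h) * h
          = (((fmSq d m k : ℝ) : ℂ))⁻¹ • (h * h) := smul_mul_assoc _ _ _
        _ = (((fmSq d m k : ℝ) : ℂ))⁻¹ • (((fmSq d m k : ℝ) : ℂ) • 1) := by
            rw [← sq, hsq]
        _ = 1 := by rw [smul_smul, inv_mul_cancel₀ hne, one_smul]
  exact ⟨hsa, hunit, hsq, hpos⟩
end

section
/- Fix an integer d ≥ 1, a real number m with 0 < m < 2, a finite-dimensional complex Hilbert space H, a Clifford system (c_1, …, c_d, γ) on H, and unitaries U_1, …, U_d on H that pairwise commute and each commute with every c_j and with γ. Then the operator D(1, m) is invertible and 𝐈(D(1, m)) = 0. -/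
section AuxLemmas

/-- Commuting endomorphisms over ℂ on a nontrivial f.d. space have a common eigenvector. -/
lemma exists_common_eigenvector (n : ℕ) :
    ∀ (V : Type u) [AddCommGroup V] [Module ℂ V] [FiniteDimensional ℂ V] [Nontrivial V]
      (f : Fin n → Module.End ℂ V), (∀ i j, Commute (f i) (f j)) →
      ∃ v : V, v ≠ 0 ∧ ∀ i, ∃ μ : ℂ, f i v = μ • v := by
  induction n with
  | zero =>
    intro V _ _ _ _ f _
    obtain ⟨v, hv⟩ := exists_ne (0 : V)
    exact ⟨v, hv, fun i => i.elim0⟩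
  | succ n ih =>
    intro V _ _ _ _ f hf
    obtain ⟨μ0, hμ0⟩ := Module.End.exists_eigenvalue (f 0)
    set E := Module.End.eigenspace (f 0) μ0 with hE
    haveI : Nontrivial E := Submodule.nontrivial_iff_ne_bot.mpr hμ0
    have hinv : ∀ (i : Fin n) (x : V), x ∈ E → f i.succ x ∈ E := by
      intro i x hx
      rw [hE, Module.End.mem_eigenspace_iff] at hx ⊢
      calc f 0 (f i.succ x) = f i.succ (f 0 x) := by
            rw [← Module.End.mul_apply, ← Module.End.mul_apply, (hf i.succ 0).eq]
        _ = μ0 • f i.succ x := by rw [hx, map_smul]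
    set g : Fin n → Module.End ℂ E := fun i => (f i.succ).restrict (hinv i) with hg
    have hgcomm : ∀ i j, Commute (g i) (g j) := by
      intro i j
      apply LinearMap.ext
      intro w
      apply Subtype.ext
      simp only [Module.End.mul_apply, hg, LinearMap.restrict_apply]
      exact LinearMap.congr_fun (hf i.succ j.succ).eq (w : V)
    obtain ⟨w, hw0, hwe⟩ := ih E g hgcomm
    refine ⟨(w : V), by simpa using hw0, ?_⟩
    intro i
    refine Fin.cases ?_ ?_ i
    · exact ⟨μ0, Module.End.mem_eigenspace_iff.mp w.2⟩
    · intro j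
      obtain ⟨μ, hμ⟩ := hwe j
      exact ⟨μ, by simpa [hg, LinearMap.restrict_apply] using congrArg Subtype.val hμ⟩

/-- If `a` commutes with an element `b` having a two-sided inverse `star b`,
then `a` commutes with `star b`. -/
lemma commute_star_right {R : Type*} [Ring R] [StarRing R] {a b : R} (h : Commute a b)
    (h1 : star b * b = 1) (h2 : b * star b = 1) : Commute a (star b) := by
  have hu : Commute a ((⟨b, star b, h2, h1⟩ : Rˣ) : R) := h
  exact hu.units_inv_right

end AuxLemmas
set_option maxHeartbeats 3000000 in
/-- for exactly commuting unitaries, `D(1,m)` is invertible and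
`𝐈(D(1,m)) = 0`. -/
theorem statement8 (d : ℕ) (hd : 1 ≤ d) (m : ℝ) (hm0 : 0 < m) (hm2 : m < 2)
    {H : Type*} [NormedAddCommGroup H] [InnerProductSpace ℂ H] [FiniteDimensional ℂ H]
    (cs : CliffordSystem H d) (U : Fin d → H →L[ℂ] H)
    (hU : ∀ j, U j ∈ unitary (H →L[ℂ] H))
    (hUU : ∀ j l, Commute (U j) (U l))
    (hUc : ∀ j l, Commute (U j) (cs.c l)) (hUγ : ∀ j, Commute (U j) cs.γ) :
    IsUnit (wilsonDirac cs U 1 m) ∧ Ind (wilsonDirac cs U 1 m) = 0 := by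
  classical
  obtain ⟨x, hxdef⟩ : ∃ t : Fin d → H →L[ℂ] H, t = fun j => xPart (U j) := ⟨_, rfl⟩
  obtain ⟨y, hydef⟩ : ∃ t : Fin d → H →L[ℂ] H, t = fun j => yPart (U j) := ⟨_, rfl⟩
  obtain ⟨A, hAdef⟩ : ∃ t : H →L[ℂ] H, t = ∑ j, Complex.I • (x j * cs.c j) := ⟨_, rfl⟩
  obtain ⟨B, hBdef⟩ : ∃ t : H →L[ℂ] H, t = (∑ j, (y j - 1)) + (m:ℂ) • 1 := ⟨_, rfl⟩
  obtain ⟨D, hDdef⟩ : ∃ t : H →L[ℂ] H, t = wilsonDirac cs U 1 m := ⟨_, rfl⟩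
  rw [show wilsonDirac cs U 1 m = D from hDdef.symm]
  have hD : D = A + cs.γ * B := by
    rw [hDdef, wilsonDirac, hAdef, hBdef]
    simp only [hxdef, hydef]
    norm_num
  -- unitarity
  have hu1 : ∀ j, star (U j) * U j = 1 := fun j => (Unitary.mem_iff.mp (hU j)).1
  have hu2 : ∀ j, U j * star (U j) = 1 := fun j => (Unitary.mem_iff.mp (hU j)).2
  have hUsU : ∀ j l, Commute (U j) (star (U l)) :=
    fun j l => commute_star_right (hUU j l) (hu1 l) (hu2 l)
  have hsUsU : ∀ j l, Commute (star (U j)) (star (U l)) := fun j l => (hUU j l).star_star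
  have hsUc : ∀ j l, Commute (star (U j)) (cs.c l) := by
    intro j l
    have h := (hUc j l).star_star
    rw [cs.c_skew] at h
    exact Commute.neg_right_iff.mp h
  have hsUγ : ∀ j, Commute (star (U j)) cs.γ := by
    intro j
    have h := (hUγ j).star_star
    rwa [cs.γ_sa] at h
  -- x and y commute with everything that U and star U commute with
  have hxK : ∀ j (K : H →L[ℂ] H), Commute (U j) K → Commute (star (U j)) K →
      Commute (x j) K := by
    intro j K h1 h2
    simp only [hxdef, xPart]
    exact (h1.sub_left h2).smul_left _
  have hyK : ∀ j (K : H →L[ℂ] H), Commute (U j) K → Commute (star (U j)) K →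
      Commute (y j) K := by
    intro j K h1 h2
    simp only [hydef, yPart]
    exact (h1.add_left h2).smul_left _
  have hKx : ∀ j (K : H →L[ℂ] H), Commute K (U j) → Commute K (star (U j)) →
      Commute K (x j) := by
    intro j K h1 h2
    simp only [hxdef, xPart]
    exact (h1.sub_right h2).smul_right _
  have hKy : ∀ j (K : H →L[ℂ] H), Commute K (U j) → Commute K (star (U j)) →
      Commute K (y j) := by
    intro j K h1 h2
    simp only [hydef, yPart]
    exact (h1.add_right h2).smul_right _
  have hxc : ∀ j l, Commute (x j) (cs.c l) := fun j l => hxK j _ (hUc j l) (hsUc j l)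
  have hyc : ∀ j l, Commute (y j) (cs.c l) := fun j l => hyK j _ (hUc j l) (hsUc j l)
  have hxγ : ∀ j, Commute (x j) cs.γ := fun j => hxK j _ (hUγ j) (hsUγ j)
  have hyγ : ∀ j, Commute (y j) cs.γ := fun j => hyK j _ (hUγ j) (hsUγ j)
  have hxx : ∀ j l, Commute (x j) (x l) :=
    fun j l => hxK j _ (hKx l _ (hUU j l) (hUsU j l)) (hKx l _ (hUsU l j).symm (hsUsU j l))
  have hxy : ∀ j l, Commute (x j) (y l) :=
    fun j l => hxK j _ (hKy l _ (hUU j l) (hUsU j l)) (hKy l _ (hUsU l j).symm (hsUsU j l))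
  have hyy : ∀ j l, Commute (y j) (y l) :=
    fun j l => hyK j _ (hKy l _ (hUU j l) (hUsU j l)) (hKy l _ (hUsU l j).symm (hsUsU j l))
  -- selfadjointness of x and y
  have hx_sa : ∀ j, star (x j) = x j := by
    intro j
    simp only [hxdef]
    rw [xPart, star_smul, star_sub, star_star]
    have : star ((2 * Complex.I)⁻¹ : ℂ) = -((2 * Complex.I)⁻¹ : ℂ) := by
      simp [Complex.star_def, ← map_inv₀]
    rw [this]
    module
  have hy_sa : ∀ j, star (y j) = y j := by
    intro j
    simp only [hydef]
    rw [yPart, star_smul, star_add, star_star]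
    have : star ((2:ℂ)⁻¹ : ℂ) = ((2:ℂ)⁻¹ : ℂ) := by simp
    rw [this, add_comm]
  -- x j ^2 + y j ^2 = 1
  have hxy_sq : ∀ j, x j * x j + y j * y j = 1 := by
    intro j
    have hI : ((2 * Complex.I)⁻¹ : ℂ) * (2 * Complex.I)⁻¹ = -(4:ℂ)⁻¹ := by
      rw [← mul_inv]
      have h : (2 * Complex.I) * (2 * Complex.I) = -4 := by
        have h2 : Complex.I * Complex.I = -1 := Complex.I_mul_I
        calc (2 * Complex.I) * (2 * Complex.I) = 4 * (Complex.I * Complex.I) := by ring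
          _ = -4 := by rw [h2]; ring
      rw [h]; norm_num
    simp only [hxdef, hydef]
    rw [xPart, yPart, smul_mul_smul_comm, smul_mul_smul_comm, hI]
    rw [sub_mul, mul_sub, mul_sub, add_mul, mul_add, mul_add, hu2 j, hu1 j]
    match_scalars <;> norm_num
  -- selfadjointness of A and B
  have hA_sa : star A = A := by
    rw [hAdef, star_sum]
    refine Finset.sum_congr rfl ?_
    intro j _
    rw [star_smul, star_mul, cs.c_skew, hx_sa, Complex.star_def, Complex.conj_I,
      neg_smul, neg_mul, smul_neg, neg_neg, ← (hxc j j).eq]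
  have hB_sa : star B = B := by
    rw [hBdef, star_add, star_sum, star_smul, star_one]
    have h1 : ∀ j ∈ Finset.univ, star (y j - 1) = y j - (1 : H →L[ℂ] H) := by
      intro j _
      rw [star_sub, star_one, hy_sa]
    rw [Finset.sum_congr rfl h1]
    congr 1
    rw [Complex.star_def, Complex.conj_ofReal]
  -- γ commutes with B, c's commute with B, x's commute with B, A commutes with B
  have hγB : Commute cs.γ B := by
    rw [hBdef]
    refine Commute.add_right ?_ ((Commute.one_right _).smul_right _)
    exact Commute.sum_right _ _ _ fun j _ => ((hyγ j).symm.sub_right (Commute.one_right _))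
  have hcB : ∀ l, Commute (cs.c l) B := by
    intro l
    rw [hBdef]
    refine Commute.add_right ?_ ((Commute.one_right _).smul_right _)
    exact Commute.sum_right _ _ _ fun j _ => ((hyc j l).symm.sub_right (Commute.one_right _))
  have hxB : ∀ l, Commute (x l) B := by
    intro l
    rw [hBdef]
    refine Commute.add_right ?_ ((Commute.one_right _).smul_right _)
    exact Commute.sum_right _ _ _ fun j _ => ((hxy l j).sub_right (Commute.one_right _))
  have hyB : ∀ l, Commute (y l) B := by
    intro l
    rw [hBdef]
    refine Commute.add_right ?_ ((Commute.one_right _).smul_right _)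
    exact Commute.sum_right _ _ _ fun j _ => ((hyy l j).sub_right (Commute.one_right _))
  have hAB : Commute A B := by
    rw [hAdef]
    exact Commute.sum_left _ _ _ fun j _ => (((hxB j).mul_left (hcB j)).smul_left _)
  -- D is selfadjoint
  have hD_sa : IsSelfAdjoint D := by
    rw [IsSelfAdjoint, hD, star_add, hA_sa, star_mul, hB_sa, cs.γ_sa, hγB.eq]
  -- Clifford basics
  have hcsq : ∀ j, cs.c j * cs.c j = -1 := by
    intro j
    have h := cs.c_rel j j
    rw [if_pos rfl] at h
    have h2 : (2:ℂ) • (cs.c j * cs.c j) = (2:ℂ) • (-1 : H →L[ℂ] H) := by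
      rw [two_smul]
      rw [h]
      match_scalars <;> norm_num
    exact smul_right_injective _ (two_ne_zero) h2
  have hcγ : ∀ j, cs.c j * cs.γ = -(cs.γ * cs.c j) := by
    intro j
    rw [cs.γ_anticomm j, neg_neg]
  -- A * γ = -(γ * A)
  have hAγ : A * cs.γ = -(cs.γ * A) := by
    rw [hAdef, Finset.sum_mul, Finset.mul_sum, ← Finset.sum_neg_distrib]
    refine Finset.sum_congr rfl ?_
    intro j _
    rw [smul_mul_assoc, mul_assoc, hcγ j, mul_neg, ← mul_assoc, (hxγ j).eq,
      mul_assoc, smul_neg, mul_smul_comm, ← mul_assoc]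
  -- D * D = T
  obtain ⟨T, hTdef⟩ : ∃ t : H →L[ℂ] H, t = (∑ j, x j * x j) + B * B := ⟨_, rfl⟩
  have hAA : A * A = ∑ j, x j * x j := by
    have expand : A * A = ∑ j, ∑ l, (-1 : ℂ) • (x j * x l * (cs.c j * cs.c l)) := by
      rw [hAdef, Finset.sum_mul_sum]
      refine Finset.sum_congr rfl fun j _ => Finset.sum_congr rfl fun l _ => ?_
      rw [smul_mul_smul_comm, Complex.I_mul_I]
      congr 1
      calc x j * cs.c j * (x l * cs.c l) = x j * (cs.c j * x l) * cs.c l := by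
            rw [mul_assoc, mul_assoc, mul_assoc]
        _ = x j * (x l * cs.c j) * cs.c l := by rw [(hxc l j).symm.eq]
        _ = x j * x l * (cs.c j * cs.c l) := by rw [mul_assoc, mul_assoc, mul_assoc]
    obtain ⟨S, hSdef⟩ : ∃ t : H →L[ℂ] H, t = ∑ j, ∑ l, (x j * x l * (cs.c j * cs.c l)) := ⟨_, rfl⟩
    have hswap : S = ∑ j, ∑ l, (x l * x j * (cs.c l * cs.c j)) := by
      rw [hSdef]
      exact Finset.sum_comm
    have hSS : S + S = ∑ j, ∑ l, (x j * x l * (cs.c j * cs.c l + cs.c l * cs.c j)) := by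
      nth_rewrite 2 [hswap]
      nth_rewrite 1 [hSdef]
      rw [← Finset.sum_add_distrib]
      refine Finset.sum_congr rfl fun j _ => ?_
      rw [← Finset.sum_add_distrib]
      refine Finset.sum_congr rfl fun l _ => ?_
      rw [mul_add]
      congr 1
      rw [(hxx l j).eq]
    have hdiag : ∑ j, ∑ l, (x j * x l * (cs.c j * cs.c l + cs.c l * cs.c j)) =
        (-2 : ℂ) • ∑ j, (x j * x j) := by
      rw [Finset.smul_sum]
      refine Finset.sum_congr rfl fun j _ => ?_
      have horig : ∀ l, x j * x l * (cs.c j * cs.c l + cs.c l * cs.c j) =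
          if j = l then (-2 : ℂ) • (x j * x l) else 0 := by
        intro l
        rw [cs.c_rel j l]
        by_cases h : j = l
        · rw [if_pos h, if_pos h, mul_smul_comm, mul_one]
        · rw [if_neg h, if_neg h, mul_zero]
      rw [Finset.sum_congr rfl fun l _ => horig l, Finset.sum_ite_eq Finset.univ j
        (fun l => (-2 : ℂ) • (x j * x l)), if_pos (Finset.mem_univ j)]
    have hSval : S = -(∑ j, x j * x j) := by
      have e1 : (2:ℂ) • S = (2:ℂ) • (-(∑ j, x j * x j)) := by
        rw [two_smul ℂ S, hSS, hdiag]
        module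
      exact smul_right_injective _ two_ne_zero e1
    have hAS : A * A = (-1 : ℂ) • S := by
      rw [expand, hSdef, Finset.smul_sum]
      refine Finset.sum_congr rfl fun j _ => ?_
      rw [Finset.smul_sum]
    rw [hAS, hSval]
    module
  have hDsq : D * D = T := by
    have h1 : A * (cs.γ * B) = -(cs.γ * B * A) := by
      rw [← mul_assoc, hAγ, neg_mul, mul_assoc, mul_assoc, hAB.eq]
    have h2 : (cs.γ * B) * (cs.γ * B) = B * B := by
      calc (cs.γ * B) * (cs.γ * B) = cs.γ * (B * cs.γ) * B := by
            rw [mul_assoc, mul_assoc, mul_assoc]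
        _ = cs.γ * (cs.γ * B) * B := by rw [hγB.symm.eq]
        _ = (cs.γ * cs.γ) * (B * B) := by rw [mul_assoc, mul_assoc, mul_assoc]
        _ = B * B := by rw [cs.γ_sq, one_mul]
    rw [hD, hTdef, add_mul, mul_add, mul_add, hAA, h1, h2]
    abel
  -- kernel analysis
  have hsax : ∀ j (v : H), (inner ℂ v (x j (x j v)) : ℂ) = ((‖x j v‖^2 : ℝ) : ℂ) := by
    intro j v
    have hadj : ContinuousLinearMap.adjoint (x j) = x j := by
      rw [← ContinuousLinearMap.star_eq_adjoint, hx_sa]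
    calc (inner ℂ v (x j (x j v)) : ℂ)
        = inner ℂ (ContinuousLinearMap.adjoint (x j) v) (x j v) :=
          (ContinuousLinearMap.adjoint_inner_left (x j) (x j v) v).symm
      _ = inner ℂ (x j v) (x j v) := by rw [hadj]
      _ = ((‖x j v‖^2 : ℝ) : ℂ) := by
          rw [inner_self_eq_norm_sq_to_K]
          try norm_cast
  have hsaB : ∀ v : H, (inner ℂ v (B (B v)) : ℂ) = ((‖B v‖^2 : ℝ) : ℂ) := by
    intro v
    have hadj : ContinuousLinearMap.adjoint B = B := by
      rw [← ContinuousLinearMap.star_eq_adjoint, hB_sa]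
    calc (inner ℂ v (B (B v)) : ℂ)
        = inner ℂ (ContinuousLinearMap.adjoint B v) (B v) :=
          (ContinuousLinearMap.adjoint_inner_left B (B v) v).symm
      _ = inner ℂ (B v) (B v) := by rw [hadj]
      _ = ((‖B v‖^2 : ℝ) : ℂ) := by
          rw [inner_self_eq_norm_sq_to_K]
          try norm_cast
  have hTker : ∀ v : H, D v = 0 → (∀ j, x j v = 0) ∧ B v = 0 := by
    intro v hv
    have h0 : (∑ j, x j (x j v)) + B (B v) = 0 := by
      have hT0 : T v = 0 := by
        rw [← hDsq, ContinuousLinearMap.mul_apply, hv, map_zero]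
      rw [hTdef] at hT0
      rw [ContinuousLinearMap.add_apply, ContinuousLinearMap.sum_apply,
        ContinuousLinearMap.mul_apply] at hT0
      convert hT0 using 2
      exact Finset.sum_congr rfl fun j _ => rfl
    have hc : (∑ j, ((‖x j v‖^2:ℝ):ℂ)) + ((‖B v‖^2:ℝ):ℂ) = 0 := by
      calc (∑ j, ((‖x j v‖^2:ℝ):ℂ)) + ((‖B v‖^2:ℝ):ℂ)
          = (∑ j, (inner ℂ v (x j (x j v)) : ℂ)) + inner ℂ v (B (B v)) := by
            rw [Finset.sum_congr rfl fun j _ => (hsax j v).symm, hsaB]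
        _ = inner ℂ v ((∑ j, x j (x j v)) + B (B v)) := by
            rw [inner_add_right, inner_sum]
        _ = 0 := by rw [h0, inner_zero_right]
    have h1 : (∑ j, ‖x j v‖^2 + ‖B v‖^2 : ℝ) = 0 := by exact_mod_cast hc
    have h2 := (add_eq_zero_iff_of_nonneg
      (Finset.sum_nonneg fun j _ => sq_nonneg _) (sq_nonneg _)).mp h1
    constructor
    · intro j
      have := (Finset.sum_eq_zero_iff_of_nonneg fun j _ => sq_nonneg (‖x j v‖)).mp h2.1
        j (Finset.mem_univ j)
      rwa [sq_eq_zero_iff, norm_eq_zero] at this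
    · have := h2.2
      rwa [sq_eq_zero_iff, norm_eq_zero] at this
  have hker : ∀ v : H, D v = 0 → v = 0 := by
    intro v hv
    by_contra hv0
    obtain ⟨hx0, hB0⟩ := hTker v hv
    -- the joint kernel W
    obtain ⟨W, hWdef⟩ : ∃ t : Submodule ℂ H,
        t = (⨅ j, LinearMap.ker (x j : H →ₗ[ℂ] H)) ⊓ LinearMap.ker (B : H →ₗ[ℂ] H) := ⟨_, rfl⟩
    have hmem : ∀ w : H, w ∈ W ↔ (∀ j, x j w = 0) ∧ B w = 0 := by
      intro w
      rw [hWdef, Submodule.mem_inf, Submodule.mem_iInf]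
      simp only [LinearMap.mem_ker, ContinuousLinearMap.coe_coe]
    have hvW : v ∈ W := (hmem v).mpr ⟨hx0, hB0⟩
    haveI : Nontrivial W := nontrivial_of_ne ⟨v, hvW⟩ 0 (by simp [Subtype.ext_iff, hv0])
    have hymaps : ∀ j (w : H), w ∈ W → y j w ∈ W := by
      intro j w hw
      obtain ⟨hw1, hw2⟩ := (hmem w).mp hw
      refine (hmem _).mpr ⟨fun l => ?_, ?_⟩
      · calc x l (y j w) = (x l * y j) w := rfl
          _ = (y j * x l) w := by rw [(hxy l j).eq]
          _ = y j (x l w) := rfl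
          _ = 0 := by rw [hw1 l, map_zero]
      · calc B (y j w) = (B * y j) w := rfl
          _ = (y j * B) w := by rw [(hyB j).symm.eq]
          _ = y j (B w) := rfl
          _ = 0 := by rw [hw2, map_zero]
    obtain ⟨g, hgdef⟩ : ∃ t : Fin d → Module.End ℂ W,
        t = fun j => ((y j : H →ₗ[ℂ] H)).restrict (fun w hw => hymaps j w hw) := ⟨_, rfl⟩
    have hgcomm : ∀ i j, Commute (g i) (g j) := by
      intro i j
      apply LinearMap.ext
      intro w
      apply Subtype.ext
      simp only [hgdef, Module.End.mul_apply, LinearMap.restrict_apply]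
      show y i (y j (w : H)) = y j (y i (w : H))
      rw [← ContinuousLinearMap.mul_apply, (hyy i j).eq, ContinuousLinearMap.mul_apply]
    obtain ⟨w, hw0, hwe⟩ := exists_common_eigenvector d W g hgcomm
    have hv'0 : (w : H) ≠ 0 := by simpa using hw0
    choose μ hμ using hwe
    have h_eig : ∀ j, y j (w : H) = μ j • (w : H) := by
      intro j
      have h := congrArg Subtype.val (hμ j)
      simpa [hgdef, LinearMap.restrict_apply] using h
    obtain ⟨hwx, hwB⟩ := (hmem (w : H)).mp w.2
    have hμsq : ∀ j, μ j = 1 ∨ μ j = -1 := by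
      intro j
      have h1 : y j (y j (w : H)) = (w : H) := by
        have happ := congrArg (fun f : H →L[ℂ] H => f (w : H)) (hxy_sq j)
        simp only [ContinuousLinearMap.add_apply, ContinuousLinearMap.mul_apply,
          ContinuousLinearMap.one_apply] at happ
        rwa [hwx j, map_zero, zero_add] at happ
      have h2 : (μ j * μ j) • (w : H) = (1:ℂ) • (w : H) := by
        calc (μ j * μ j) • (w : H) = μ j • (μ j • (w : H)) := by rw [mul_smul]
          _ = μ j • (y j (w : H)) := by rw [h_eig j]
          _ = y j (μ j • (w : H)) := (map_smul _ _ _).symm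
          _ = y j (y j (w : H)) := by rw [h_eig j]
          _ = (w : H) := h1
          _ = (1:ℂ) • (w : H) := (one_smul _ _).symm
      have h3 : μ j * μ j = 1 := smul_left_injective ℂ hv'0 h2
      exact mul_self_eq_one_iff.mp h3
    have hBw : ((∑ j, (μ j - 1)) + (m:ℂ)) • (w : H) = 0 := by
      rw [← hwB, hBdef]
      rw [ContinuousLinearMap.add_apply, ContinuousLinearMap.sum_apply,
        ContinuousLinearMap.smul_apply, ContinuousLinearMap.one_apply, add_smul,
        Finset.sum_smul]
      congr 1
      refine Finset.sum_congr rfl fun j _ => ?_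
      rw [ContinuousLinearMap.sub_apply, ContinuousLinearMap.one_apply, h_eig j,
        sub_smul, one_smul]
    have hscal : (∑ j, (μ j - 1)) + (m:ℂ) = 0 := by
      rcases smul_eq_zero.mp hBw with h | h
      · exact h
      · exact absurd h hv'0
    obtain ⟨k, hkdef⟩ : ∃ t : ℕ, t = (Finset.univ.filter fun j => μ j = -1).card := ⟨_, rfl⟩
    have hsum : ∑ j, (μ j - 1) = -(2 * (k:ℂ)) := by
      have hterm : ∀ j ∈ Finset.univ, μ j - 1 = if μ j = -1 then (-2:ℂ) else 0 := by
        intro j _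
        rcases hμsq j with h | h
        · rw [h, if_neg (by norm_num), sub_self]
        · rw [h, if_pos rfl]; norm_num
      rw [Finset.sum_congr rfl hterm, Finset.sum_ite, Finset.sum_const, Finset.sum_const,
        smul_zero, add_zero, ← hkdef, nsmul_eq_mul]
      ring
    have hmk : (m:ℂ) = 2 * (k:ℂ) := by
      rw [hsum] at hscal
      linear_combination hscal
    have hmk' : m = 2 * (k:ℝ) := by exact_mod_cast hmk
    rcases Nat.eq_zero_or_pos k with hk | hk
    · rw [hk] at hmk'; norm_num at hmk'; linarith
    · have : (1:ℝ) ≤ (k:ℝ) := by exact_mod_cast hk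
      linarith
  -- invertibility
  have hinj : Function.Injective D := by
    intro a b hab
    have h := hker (a - b) (by rw [map_sub, hab, sub_self])
    exact sub_eq_zero.mp h
  have hsurj : Function.Surjective D := by
    have := (LinearMap.injective_iff_surjective (f := (D : H →ₗ[ℂ] H))).mp hinj
    exact this
  obtain ⟨e, hedef⟩ : ∃ t : H ≃ₗ[ℂ] H, t = LinearEquiv.ofBijective (D : H →ₗ[ℂ] H)
      ⟨hinj, hsurj⟩ := ⟨_, rfl⟩
  have heD : ∀ v : H, e v = D v := by
    intro v; rw [hedef]; rfl
  obtain ⟨Dinv, hDinvdef⟩ : ∃ t : H →L[ℂ] H,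
      t = LinearMap.toContinuousLinearMap (e.symm : H →ₗ[ℂ] H) := ⟨_, rfl⟩
  have hDinv : ∀ v : H, Dinv v = e.symm v := by
    intro v; rw [hDinvdef]; rfl
  have hUnitD : IsUnit D := by
    refine isUnit_iff_exists.mpr ⟨Dinv, ?_, ?_⟩
    · ext v
      rw [ContinuousLinearMap.mul_apply, hDinv, ContinuousLinearMap.one_apply, ← heD,
        e.apply_symm_apply]
    · ext v
      rw [ContinuousLinearMap.mul_apply, hDinv, ContinuousLinearMap.one_apply, ← heD,
        e.symm_apply_apply]
  -- spectral decomposition of D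
  have hsym : (D : H →ₗ[ℂ] H).IsSymmetric := hD_sa.isSymmetric
  obtain ⟨n, hn⟩ : ∃ n, Module.finrank ℂ H = n := ⟨_, rfl⟩
  obtain ⟨b, hbdef⟩ : ∃ t : OrthonormalBasis (Fin n) ℂ H, t = hsym.eigenvectorBasis hn :=
    ⟨_, rfl⟩
  obtain ⟨μ, hμdef⟩ : ∃ t : Fin n → ℝ, t = hsym.eigenvalues hn := ⟨_, rfl⟩
  have hbD : ∀ i, D (b i) = ((μ i : ℝ) : ℂ) • b i := by
    intro i
    rw [hbdef, hμdef]
    exact hsym.apply_eigenvectorBasis hn i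
  have hμ0 : ∀ i, μ i ≠ 0 := by
    intro i h0
    have hz : D (b i) = 0 := by rw [hbD i, h0]; simp
    have := hker (b i) hz
    have hb1 : ‖b i‖ = 1 := b.orthonormal.1 i
    rw [this] at hb1
    simp at hb1
  have hT_sa : star T = T := by
    rw [← hDsq, star_mul, hD_sa.star_eq]
  have hbT : ∀ i, T (b i) = ((μ i * μ i : ℝ) : ℂ) • b i := by
    intro i
    rw [← hDsq, ContinuousLinearMap.mul_apply, hbD i, map_smul, hbD i, smul_smul]
    norm_cast
  -- the function G and the operator hop with hop (b i) = G (μ i * μ i) • b i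
  obtain ⟨G, hGdef⟩ : ∃ t : ℝ → ℂ, t = fun s => (((Real.sqrt s)⁻¹ : ℝ) : ℂ) := ⟨_, rfl⟩
  obtain ⟨hop, hopdef⟩ : ∃ t : H →L[ℂ] H,
      t = LinearMap.toContinuousLinearMap
        (b.toBasis.constr ℂ (fun i => G (μ i * μ i) • b i)) := ⟨_, rfl⟩
  have hopb : ∀ i, hop (b i) = G (μ i * μ i) • b i := by
    intro i
    have h1 := Module.Basis.constr_basis b.toBasis ℂ (fun i => G (μ i * μ i) • b i) i
    rw [OrthonormalBasis.coe_toBasis] at h1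
    rw [hopdef]
    rw [LinearMap.coe_toContinuousLinearMap']
    exact h1
  -- inner products against the basis
  have hrepr_eig : ∀ (K : H →L[ℂ] H), star K = K → ∀ (i : Fin n) (lam : ℝ) (u : H),
      K (b i) = ((lam : ℝ) : ℂ) • b i → (inner ℂ (b i) (K u) : ℂ) = lam * b.repr u i := by
    intro K hK i lam u hKb
    have hadj : ContinuousLinearMap.adjoint K = K := by
      rw [← ContinuousLinearMap.star_eq_adjoint, hK]
    calc (inner ℂ (b i) (K u) : ℂ)
        = inner ℂ (ContinuousLinearMap.adjoint K (b i)) u :=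
          (ContinuousLinearMap.adjoint_inner_left K u (b i)).symm
      _ = inner ℂ (((lam : ℝ) : ℂ) • b i) u := by rw [hadj, hKb]
      _ = lam * b.repr u i := by
          rw [inner_smul_left, ← OrthonormalBasis.repr_apply_apply]
          norm_cast
          rw [Complex.conj_ofReal]
  -- key: hop acts as G lam on eigenvectors of T
  have hkey : ∀ (lam : ℝ) (u : H), T u = ((lam : ℝ) : ℂ) • u → hop u = G lam • u := by
    intro lam u hu
    have hrep : ∀ i, μ i * μ i ≠ lam → b.repr u i = 0 := by
      intro i hne
      have h1 : (inner ℂ (b i) (T u) : ℂ) = lam * b.repr u i := by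
        rw [hu, inner_smul_right, ← OrthonormalBasis.repr_apply_apply]
      have h2 := hrepr_eig T hT_sa i (μ i * μ i) u (hbT i)
      have h3 : (((μ i * μ i : ℝ) : ℂ) - ((lam : ℝ) : ℂ)) * b.repr u i = 0 := by
        rw [sub_mul, ← h2, ← h1, sub_self]
      rcases mul_eq_zero.mp h3 with h | h
      · exfalso
        apply hne
        have : ((μ i * μ i : ℝ) : ℂ) = ((lam : ℝ) : ℂ) := by
          rw [sub_eq_zero] at h; exact_mod_cast h
        exact_mod_cast this
      · exact h
    conv_lhs => rw [← b.sum_repr u]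
    conv_rhs => rw [← b.sum_repr u]
    rw [map_sum, Finset.smul_sum]
    refine Finset.sum_congr rfl fun i _ => ?_
    rw [map_smul, hopb i, smul_smul, smul_smul]
    by_cases hzero : b.repr u i = 0
    · simp [hzero]
    · have hlam : μ i * μ i = lam := by_contra fun hne => hzero (hrep i hne)
      rw [hlam, mul_comm]
  -- anything commuting with T commutes with hop
  have hcommute : ∀ K : H →L[ℂ] H, Commute K T → Commute K hop := by
    intro K hK
    have hext : ∀ i, K (hop (b i)) = hop (K (b i)) := by
      intro i
      have hTK : T (K (b i)) = ((μ i * μ i : ℝ) : ℂ) • K (b i) := by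
        calc T (K (b i)) = (T * K) (b i) := rfl
          _ = (K * T) (b i) := by rw [hK.symm.eq]
          _ = K (T (b i)) := rfl
          _ = ((μ i * μ i : ℝ) : ℂ) • K (b i) := by rw [hbT i, map_smul]
      rw [hopb i, map_smul, hkey (μ i * μ i) (K (b i)) hTK]
    have heq : K * hop = hop * K := by
      apply ContinuousLinearMap.coe_inj.mp
      refine Module.Basis.ext b.toBasis fun i => ?_
      simp only [OrthonormalBasis.coe_toBasis]
      show K (hop (b i)) = hop (K (b i))
      exact hext i
    exact heq
  -- commutation facts needed for the trace argument
  have hγT : Commute cs.γ T := by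
    rw [hTdef]
    refine Commute.add_right ?_ (hγB.mul_right hγB)
    exact Commute.sum_right _ _ _ fun j _ => ((hxγ j).symm.mul_right (hxγ j).symm)
  obtain ⟨c0, hc0def⟩ : ∃ t : H →L[ℂ] H, t = cs.c ⟨0, hd⟩ := ⟨_, rfl⟩
  have hc0T : Commute c0 T := by
    rw [hTdef, hc0def]
    refine Commute.add_right ?_ ((hcB _).mul_right (hcB _))
    exact Commute.sum_right _ _ _ fun j _ => ((hxc j _).symm.mul_right (hxc j _).symm)
  have hγhop : Commute cs.γ hop := hcommute cs.γ hγT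
  have hc0hop : Commute c0 hop := hcommute c0 hc0T
  have hγA : cs.γ * A = -(A * cs.γ) := by rw [hAγ, neg_neg]
  have hc0sq : c0 * c0 = -1 := by rw [hc0def]; exact hcsq _
  have hc0γ : c0 * cs.γ = -(cs.γ * c0) := by rw [hc0def]; exact hcγ _
  have hc0B : Commute c0 B := by rw [hc0def]; exact hcB _
  -- the trace functional
  obtain ⟨trC, htrCdef⟩ : ∃ t : (H →L[ℂ] H) → ℂ,
      t = fun f : H →L[ℂ] H => LinearMap.trace ℂ H (ContinuousLinearMap.toLinearMap f) := ⟨_, rfl⟩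
  have trC_mul : ∀ f g : H →L[ℂ] H, trC (f * g) = trC (g * f) := by
    intro f g; rw [htrCdef]; exact LinearMap.trace_mul_comm ℂ _ _
  have trC_neg : ∀ f : H →L[ℂ] H, trC (-f) = -(trC f) := by
    intro f; rw [htrCdef]
    exact map_neg (LinearMap.trace ℂ H) (f : H →ₗ[ℂ] H)
  have trC_add : ∀ f g : H →L[ℂ] H, trC (f + g) = trC f + trC g := by
    intro f g; rw [htrCdef]
    exact map_add (LinearMap.trace ℂ H) (f : H →ₗ[ℂ] H) (g : H →ₗ[ℂ] H)
  -- trace of A * hop vanishes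
  have ht1 : trC (A * hop) = 0 := by
    have e2 : (cs.γ * (A * hop)) * cs.γ = -(A * hop) := by
      calc (cs.γ * (A * hop)) * cs.γ = ((cs.γ * A) * hop) * cs.γ := by simp only [mul_assoc]
        _ = (-(A * cs.γ) * hop) * cs.γ := by rw [hγA]
        _ = -(A * ((cs.γ * hop) * cs.γ)) := by simp only [neg_mul, mul_assoc]
        _ = -(A * ((hop * cs.γ) * cs.γ)) := by rw [hγhop.eq]
        _ = -((A * hop) * (cs.γ * cs.γ)) := by simp only [mul_assoc]
        _ = -(A * hop) := by rw [cs.γ_sq, mul_one]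
    have e1 : trC ((cs.γ * (A * hop)) * cs.γ) = trC (A * hop) := by
      rw [trC_mul, ← mul_assoc, cs.γ_sq, one_mul]
    rw [e2, trC_neg] at e1
    linear_combination -(e1) / 2
  -- trace of γ * (B * hop) vanishes
  have ht2 : trC (cs.γ * (B * hop)) = 0 := by
    have f2 : (c0 * (cs.γ * (B * hop))) * c0 = cs.γ * (B * hop) := by
      calc (c0 * (cs.γ * (B * hop))) * c0
          = ((c0 * cs.γ) * (B * hop)) * c0 := by simp only [mul_assoc]
        _ = (-(cs.γ * c0) * (B * hop)) * c0 := by rw [hc0γ]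
        _ = -(cs.γ * ((c0 * B) * (hop * c0))) := by simp only [neg_mul, mul_assoc]
        _ = -(cs.γ * ((B * c0) * (hop * c0))) := by rw [hc0B.eq]
        _ = -(cs.γ * (B * ((c0 * hop) * c0))) := by simp only [mul_assoc]
        _ = -(cs.γ * (B * ((hop * c0) * c0))) := by rw [hc0hop.eq]
        _ = -(cs.γ * (B * (hop * (c0 * c0)))) := by simp only [mul_assoc]
        _ = -(cs.γ * (B * (hop * (-1)))) := by rw [hc0sq]
        _ = cs.γ * (B * hop) := by simp only [mul_neg, mul_one, neg_neg]
    have f1 : trC ((c0 * (cs.γ * (B * hop))) * c0) = -(trC (cs.γ * (B * hop))) := by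
      rw [trC_mul, ← mul_assoc, hc0sq, neg_one_mul, trC_neg]
    rw [f2] at f1
    linear_combination f1 / 2
  -- total trace of D * hop vanishes
  have htr0 : trC (D * hop) = 0 := by
    have hsplit : D * hop = A * hop + cs.γ * (B * hop) := by
      rw [hD, add_mul, mul_assoc]
    rw [hsplit, trC_add, ht1, ht2, add_zero]
  -- trace in the eigenbasis
  have htrace_basis : ∀ f : H →L[ℂ] H, trC f = ∑ i, b.repr (f (b i)) i := by
    intro f
    rw [htrCdef]
    show LinearMap.trace ℂ H (ContinuousLinearMap.toLinearMap f) = _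
    rw [LinearMap.trace_eq_matrix_trace ℂ b.toBasis]
    simp only [Matrix.trace, Matrix.diag]
    refine Finset.sum_congr rfl fun i _ => ?_
    rw [LinearMap.toMatrix_apply, OrthonormalBasis.coe_toBasis,
      OrthonormalBasis.coe_toBasis_repr_apply]
    rfl
  have hsgn : ∀ i, b.repr ((D * hop) (b i)) i = (if 0 < μ i then 1 else -1 : ℂ) := by
    intro i
    have happ : (D * hop) (b i) = (G (μ i * μ i) * ((μ i : ℝ) : ℂ)) • b i := by
      rw [ContinuousLinearMap.mul_apply, hopb i, map_smul, hbD i, smul_smul]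
    rw [happ, map_smul]
    have hone : b.repr (b i) i = 1 := by
      rw [OrthonormalBasis.repr_self, EuclideanSpace.single_apply, if_pos rfl]
    have happly : ((G (μ i * μ i) * ((μ i : ℝ) : ℂ)) • (b.repr (b i))) i
        = (G (μ i * μ i) * ((μ i : ℝ) : ℂ)) * (b.repr (b i) i) := rfl
    rw [happly, hone, mul_one, hGdef]
    have hs : Real.sqrt (μ i * μ i) = |μ i| := Real.sqrt_mul_self_eq_abs _
    simp only [hs]
    have hreal : ((|μ i|)⁻¹ * μ i : ℝ) = (if 0 < μ i then (1:ℝ) else -1) := by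
      by_cases h : 0 < μ i
      · rw [if_pos h, abs_of_pos h]
        field_simp
      · rw [if_neg h, abs_of_neg (lt_of_le_of_ne (not_lt.mp h) (hμ0 i))]
        have hne := hμ0 i
        field_simp
    calc ((((|μ i|)⁻¹:ℝ)):ℂ) * ((μ i:ℝ):ℂ) = (((|μ i|)⁻¹ * μ i : ℝ):ℂ) := by
          push_cast; ring
      _ = (if 0 < μ i then 1 else -1 : ℂ) := by
          rw [hreal]; split_ifs <;> norm_num
  -- the signed count vanishes
  have hsum0 : ∑ i, (if 0 < μ i then 1 else -1 : ℂ) = 0 := by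
    calc ∑ i, (if 0 < μ i then 1 else -1 : ℂ)
        = ∑ i, b.repr ((D * hop) (b i)) i :=
          Finset.sum_congr rfl fun i _ => (hsgn i).symm
      _ = trC (D * hop) := (htrace_basis _).symm
      _ = 0 := htr0
  have hcard : (Finset.univ.filter fun i => 0 < μ i).card
      = (Finset.univ.filter fun i => μ i < 0).card := by
    have h1 : ∑ i, (if 0 < μ i then 1 else -1 : ℂ)
        = ((Finset.univ.filter fun i => 0 < μ i).card : ℂ)
          - ((Finset.univ.filter fun i => ¬ 0 < μ i).card : ℂ) := by
      rw [Finset.sum_ite, Finset.sum_const, Finset.sum_const, nsmul_eq_mul, nsmul_eq_mul,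
        mul_one]
      ring
    have h2 : (Finset.univ.filter fun i => ¬ 0 < μ i)
        = (Finset.univ.filter fun i => μ i < 0) := by
      refine Finset.filter_congr fun i _ => ?_
      constructor
      · intro h; exact lt_of_le_of_ne (not_lt.mp h) (hμ0 i)
      · intro h; exact not_lt.mpr (le_of_lt h)
    rw [h2, hsum0] at h1
    have h3 : ((Finset.univ.filter fun i => 0 < μ i).card : ℂ)
        = ((Finset.univ.filter fun i => μ i < 0).card : ℂ) :=
      sub_eq_zero.mp h1.symm
    exact_mod_cast h3
  -- generic eigen-coefficient vanishing
  have hgen : ∀ (v : H) (ν : ℝ), D v = ((ν:ℝ):ℂ) • v → ∀ i, μ i ≠ ν → b.repr v i = 0 := by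
    intro v ν hv i hne
    have h1 : (inner ℂ (b i) (D v) : ℂ) = ν * b.repr v i := by
      rw [hv, inner_smul_right, ← OrthonormalBasis.repr_apply_apply]
    have h2 := hrepr_eig D hD_sa.star_eq i (μ i) v (hbD i)
    have h3 : (((μ i : ℝ):ℂ) - ((ν:ℝ):ℂ)) * b.repr v i = 0 := by
      rw [sub_mul, ← h2, ← h1, sub_self]
    rcases mul_eq_zero.mp h3 with h | h
    · exfalso; apply hne
      have he : ((μ i:ℝ):ℂ) = ((ν:ℝ):ℂ) := sub_eq_zero.mp h
      exact_mod_cast he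
    · exact h
  have hposSpan : posSpace D
      = Submodule.span ℂ (Set.range fun i : {i : Fin n // 0 < μ i} => b ↑i) := by
    apply le_antisymm
    · rw [posSpace]
      refine iSup_le fun ν => iSup_le fun hν => ?_
      intro v hv
      have hvD : D v = ((ν:ℝ):ℂ) • v := Module.End.mem_eigenspace_iff.mp hv
      have hrep : v = ∑ i, b.repr v i • b i := (b.sum_repr v).symm
      rw [hrep]
      refine Submodule.sum_mem _ fun i _ => ?_
      by_cases h : 0 < μ i
      · exact Submodule.smul_mem _ _ (Submodule.subset_span ⟨⟨i, h⟩, rfl⟩)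
      · have hz : b.repr v i = 0 := hgen v ν hvD i (fun he => h (he ▸ hν))
        rw [hz, zero_smul]
        exact Submodule.zero_mem _
    · rw [Submodule.span_le]
      rintro _ ⟨i, rfl⟩
      rw [posSpace]
      have hmem : b ↑i ∈ Module.End.eigenspace (ContinuousLinearMap.toLinearMap D)
          ((μ ↑i : ℝ):ℂ) := Module.End.mem_eigenspace_iff.mpr (hbD ↑i)
      exact le_iSup₂ (f := fun (ν:ℝ) (_ : 0 < ν) =>
        Module.End.eigenspace (ContinuousLinearMap.toLinearMap D) ((ν:ℝ):ℂ)) (μ ↑i) i.2 hmem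
  have hnegSpan : negSpace D
      = Submodule.span ℂ (Set.range fun i : {i : Fin n // μ i < 0} => b ↑i) := by
    apply le_antisymm
    · rw [negSpace]
      refine iSup_le fun ν => iSup_le fun hν => ?_
      intro v hv
      have hvD : D v = ((ν:ℝ):ℂ) • v := Module.End.mem_eigenspace_iff.mp hv
      have hrep : v = ∑ i, b.repr v i • b i := (b.sum_repr v).symm
      rw [hrep]
      refine Submodule.sum_mem _ fun i _ => ?_
      by_cases h : μ i < 0
      · exact Submodule.smul_mem _ _ (Submodule.subset_span ⟨⟨i, h⟩, rfl⟩)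
      · have hz : b.repr v i = 0 := hgen v ν hvD i (fun he => h (he ▸ hν))
        rw [hz, zero_smul]
        exact Submodule.zero_mem _
    · rw [Submodule.span_le]
      rintro _ ⟨i, rfl⟩
      rw [negSpace]
      have hmem : b ↑i ∈ Module.End.eigenspace (ContinuousLinearMap.toLinearMap D)
          ((μ ↑i : ℝ):ℂ) := Module.End.mem_eigenspace_iff.mpr (hbD ↑i)
      exact le_iSup₂ (f := fun (ν:ℝ) (_ : ν < 0) =>
        Module.End.eigenspace (ContinuousLinearMap.toLinearMap D) ((ν:ℝ):ℂ)) (μ ↑i) i.2 hmem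
  have hlipos : LinearIndependent ℂ (fun i : {i : Fin n // 0 < μ i} => b ↑i) :=
    b.orthonormal.linearIndependent.comp Subtype.val Subtype.val_injective
  have hlineg : LinearIndependent ℂ (fun i : {i : Fin n // μ i < 0} => b ↑i) :=
    b.orthonormal.linearIndependent.comp Subtype.val Subtype.val_injective
  have hrankpos : Module.finrank ℂ (posSpace D) = Fintype.card {i : Fin n // 0 < μ i} := by
    rw [hposSpan]
    exact finrank_span_eq_card hlipos
  have hrankneg : Module.finrank ℂ (negSpace D) = Fintype.card {i : Fin n // μ i < 0} := by
    rw [hnegSpan]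
    exact finrank_span_eq_card hlineg
  have hcardpos : Fintype.card {i : Fin n // 0 < μ i}
      = (Finset.univ.filter fun i => 0 < μ i).card := Fintype.card_subtype _
  have hcardneg : Fintype.card {i : Fin n // μ i < 0}
      = (Finset.univ.filter fun i => μ i < 0).card := Fintype.card_subtype _
  refine ⟨hUnitD, ?_⟩
  rw [Ind, hrankpos, hrankneg, hcardpos, hcardneg, hcard]
  ring
end

section
/- For every integer d ≥ 1, every real number m with 0 < m < 2, and every k = (k_1, …, k_d) ∈ ℝ^d, one has Σ_{j=1}^d sin²(2π k_j) + (Σ_{j=1}^d (cos(2π k_j) − 1) + m)² > 0. -/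
/-- scalar positivity at the heart of Lemma 3.5. -/
theorem statement9 (d : ℕ) (hd : 1 ≤ d) (m : ℝ) (hm0 : 0 < m) (hm2 : m < 2)
    (k : Fin d → ℝ) :
    0 < ∑ j, Real.sin (2 * Real.pi * k j) ^ 2 +
      (∑ j, (Real.cos (2 * Real.pi * k j) - 1) + m) ^ 2 := by
  by_contra h
  push_neg at h
  have hs : ∀ j ∈ Finset.univ, (0:ℝ) ≤ Real.sin (2 * Real.pi * k j) ^ 2 :=
    fun j _ => sq_nonneg _
  have hsum : (0:ℝ) ≤ ∑ j, Real.sin (2 * Real.pi * k j) ^ 2 := Finset.sum_nonneg hs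
  have hsq : (0:ℝ) ≤ (∑ j, (Real.cos (2 * Real.pi * k j) - 1) + m) ^ 2 := sq_nonneg _
  have h1 : ∑ j, Real.sin (2 * Real.pi * k j) ^ 2 = 0 := le_antisymm (by linarith) hsum
  have h2 : (∑ j, (Real.cos (2 * Real.pi * k j) - 1) + m) ^ 2 = 0 :=
    le_antisymm (by linarith) hsq
  have hsin : ∀ j, Real.sin (2 * Real.pi * k j) = 0 := by
    intro j
    have := (Finset.sum_eq_zero_iff_of_nonneg hs).mp h1 j (Finset.mem_univ j)
    exact pow_eq_zero_iff (n := 2) (by norm_num) |>.mp this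
  have hcos : ∀ j, Real.cos (2 * Real.pi * k j) - 1 = 0 ∨
      Real.cos (2 * Real.pi * k j) - 1 = -2 := by
    intro j
    have hpy := Real.sin_sq_add_cos_sq (2 * Real.pi * k j)
    rw [hsin j] at hpy
    have : Real.cos (2 * Real.pi * k j) ^ 2 = 1 := by nlinarith
    have : (Real.cos (2 * Real.pi * k j) - 1) * (Real.cos (2 * Real.pi * k j) + 1) = 0 := by
      nlinarith
    rcases mul_eq_zero.mp this with h | h
    · left; linarith
    · right; linarith
  -- the sum equals -2 * card of the set where cos = -1
  set S := Finset.univ.filter (fun j => Real.cos (2 * Real.pi * k j) - 1 = -2) with hS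
  have hsum2 : ∑ j, (Real.cos (2 * Real.pi * k j) - 1) = -2 * S.card := by
    rw [← Finset.sum_filter_add_sum_filter_not Finset.univ
      (fun j => Real.cos (2 * Real.pi * k j) - 1 = -2)]
    have hA : ∑ j ∈ S, (Real.cos (2 * Real.pi * k j) - 1) = -2 * S.card := by
      rw [Finset.sum_congr rfl (fun j hj => (Finset.mem_filter.mp hj).2),
        Finset.sum_const, nsmul_eq_mul]
      ring
    have hB : ∑ j ∈ Finset.univ.filter
        (fun j => ¬ (Real.cos (2 * Real.pi * k j) - 1 = -2)),
        (Real.cos (2 * Real.pi * k j) - 1) = 0 := by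
      apply Finset.sum_eq_zero
      intro j hj
      rcases hcos j with h | h
      · exact h
      · exact absurd h (Finset.mem_filter.mp hj).2
    rw [hA, hB, add_zero]
  have hm : m = 2 * S.card := by
    have := pow_eq_zero_iff (n := 2) (by norm_num) |>.mp h2
    rw [hsum2] at this
    linarith
  rcases Nat.eq_zero_or_pos S.card with h0 | h0
  · rw [h0] at hm; simp at hm; linarith
  · have : (1:ℝ) ≤ S.card := by exact_mod_cast h0
    linarith
end
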